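/- arXiv:2403.11696 — 4 statements merged into one kernel-verified Lean document; each statement's English description precedes it below -/
import Mathlib

section
/- Assume the power-law circle spectrum λ_l = (|l|+1)^{−ν}, |c_l|² = (|l|+1)^{−κ−1} (l ∈ ℤ), and let a,b ≥ 0 with α = aν + b(κ+1) > 1. Then for all N ≥ 1 and integers k with |k| ≤ N/2 the exact identity [λ_k^a|c_k|^{2b}]_N = λ_k^a|c_k|^{2b} + N^{−α} ( ζ(α, 1+(1+k)/N) + ζ(α, 1+(1−k)/N) ) holds, where ζ(α,x) = Σ_{n≥0}(n+x)^{−α} is the Hurwitz zeta function; consequently [λ_k^a|c_k|^{2b}]_N = λ_k^a|c_k|^{2b} + 2ζ(α) N^{−α} + O(N^{−α−1}) + O(τ² N^{−α}) uniformly over |k| ≤ N/2, where ζ(α) is the Riemann zeta function and τ = (|k|+1)/N. -/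
noncomputable section

/-- Power-law kernel eigenvalues on the circle: `λ_l = (|l|+1)^{-ν}`. -/
def plLam (ν : ℝ) (l : ℤ) : ℝ := ((|l| : ℝ) + 1) ^ (-ν)

/-- Power-law squared target coefficients on the circle: `|c_l|² = (|l|+1)^{-κ-1}`. -/
def plCsq (κ : ℝ) (l : ℤ) : ℝ := ((|l| : ℝ) + 1) ^ (-κ - 1)

/-- The quantity `λ_l^a |c_l|^{2b}` for the power-law circle spectrum. -/
def plTerm (ν κ a b : ℝ) (l : ℤ) : ℝ := (plLam ν l) ^ a * (plCsq κ l) ^ b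

/-- The Hurwitz zeta function `ζ(α,x) = Σ_{n≥0} (n+x)^{-α}` (as a real series). -/
def hurwitzZetaSum (α x : ℝ) : ℝ := ∑' n : ℕ, ((n : ℝ) + x) ^ (-α)



lemma hw_summable {α x : ℝ} (hα : 1 < α) (hx : 0 < x) :
    Summable (fun n : ℕ => ((n : ℝ) + x) ^ (-α)) := by
  have h1 : Summable (fun n : ℕ => ((n : ℝ) + 1) ^ (-α)) := by
    have := (summable_nat_add_iff 1).mpr (Real.summable_nat_rpow.mpr (by linarith : -α < -1))
    simpa using this
  have hm : 0 < min x 1 := lt_min hx one_pos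
  refine Summable.of_nonneg_of_le (fun n => Real.rpow_nonneg (by positivity) _)
    (fun n => ?_) (h1.mul_left ((min x 1) ^ (-α)))
  rw [← Real.mul_rpow hm.le (by positivity)]
  apply Real.rpow_le_rpow_of_nonpos (by positivity) ?_ (by linarith)
  rcases le_total x 1 with h | h
  · rw [min_eq_left h]; nlinarith [Nat.cast_nonneg (α := ℝ) n]
  · rw [min_eq_right h]; nlinarith [Nat.cast_nonneg (α := ℝ) n]

lemma hasDerivAt_shift_rpow {c t p : ℝ} (h : 0 < c + t) :
    HasDerivAt (fun s => (c + s) ^ p) (p * (c + t) ^ (p - 1)) t := by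
  have h1 : HasDerivAt (fun s : ℝ => c + s) 1 t := (hasDerivAt_id t).const_add c
  have h2 := Real.hasDerivAt_rpow_const (x := c + t) (p := p) (Or.inl h.ne')
  simpa [Function.comp_def] using h2.comp t h1

lemma rpow_lipschitz {p c : ℝ} (hp : 0 < p) (hc : 1 ≤ c) {t : ℝ}
    (ht : t ∈ Set.Icc (-(1/2) : ℝ) (3/2)) :
    |(c + t) ^ (-p) - c ^ (-p)| ≤ p * (c - 1/2) ^ (-p - 1) * |t| := by
  have hc2 : (0:ℝ) < c - 1/2 := by linarith
  have key := Convex.norm_image_sub_le_of_norm_hasDerivWithin_le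
    (f := fun s => (c + s) ^ (-p)) (f' := fun s => (-p) * (c + s) ^ (-p - 1))
    (s := Set.Icc (-(1/2) : ℝ) (3/2)) (C := p * (c - 1/2) ^ (-p - 1)) (x := 0) (y := t)
    (fun s hs => (hasDerivAt_shift_rpow (by rcases hs with ⟨h1, h2⟩; linarith)).hasDerivWithinAt)
    (fun s hs => ?_) (convex_Icc _ _) (Set.mem_Icc.mpr ⟨by norm_num, by norm_num⟩) ht
  · simpa using key
  · rcases hs with ⟨h1, h2⟩
    have hcs : (0:ℝ) < c + s := by linarith
    rw [Real.norm_eq_abs, abs_mul, abs_neg, abs_of_pos hp,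
      abs_of_pos (Real.rpow_pos_of_pos hcs _)]
    have := Real.rpow_le_rpow_of_nonpos hc2 (by linarith : c - 1/2 ≤ c + s)
      (by linarith : -p - 1 ≤ 0)
    nlinarith [Real.rpow_pos_of_pos hc2 (-p-1)]

lemma taylor2 {α c : ℝ} (hα : 0 < α) (hc : 1 ≤ c) {t : ℝ}
    (ht : t ∈ Set.Icc (-(1/2) : ℝ) (3/2)) :
    |(c + t) ^ (-α) - c ^ (-α) + α * c ^ (-α - 1) * t| ≤
      α * (α + 1) * (c - 1/2) ^ (-α - 2) * t ^ 2 := by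
  have hsub : Set.uIcc (0:ℝ) t ⊆ Set.Icc (-(1/2) : ℝ) (3/2) :=
    Set.uIcc_subset_Icc (Set.mem_Icc.mpr ⟨by norm_num, by norm_num⟩) ht
  have habs : ∀ s ∈ Set.uIcc (0:ℝ) t, |s| ≤ |t| := by
    intro s hs
    rcases Set.mem_uIcc.mp hs with ⟨h1, h2⟩ | ⟨h1, h2⟩
    · rw [abs_of_nonneg h1]; exact h2.trans (le_abs_self t)
    · rw [abs_of_nonpos h2]; linarith [neg_le_abs t]
  have key := Convex.norm_image_sub_le_of_norm_hasDerivWithin_le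
    (f := fun s => (c + s) ^ (-α) - c ^ (-α) + α * c ^ (-α - 1) * s)
    (f' := fun s => (-α) * (c + s) ^ (-α - 1) + α * c ^ (-α - 1))
    (s := Set.uIcc (0:ℝ) t) (C := α * (α + 1) * (c - 1/2) ^ (-α - 2) * |t|)
    (x := 0) (y := t)
    (fun s hs => ?_) (fun s hs => ?_) (convex_uIcc _ _) Set.left_mem_uIcc Set.right_mem_uIcc
  · rw [Real.norm_eq_abs, Real.norm_eq_abs] at key
    simp only [mul_zero, add_zero, sub_zero, add_sub_cancel_left] at key
    calc |(c + t) ^ (-α) - c ^ (-α) + α * c ^ (-α - 1) * t|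
        = |(c + t) ^ (-α) - c ^ (-α) + α * c ^ (-α - 1) * t - (c ^ (-α) - c ^ (-α))| := by
          norm_num
      _ ≤ α * (α + 1) * (c - 1/2) ^ (-α - 2) * |t| * |t| := key
      _ = α * (α + 1) * (c - 1/2) ^ (-α - 2) * t ^ 2 := by
          rw [mul_assoc, ← abs_mul, ← sq, abs_of_nonneg (sq_nonneg t)]
  · have hcs : 0 < c + s := by
      have := hsub hs; rcases this with ⟨h1, h2⟩; linarith
    have h1 := (hasDerivAt_shift_rpow (p := -α) hcs).sub_const (c ^ (-α))
    have h2 : HasDerivAt (fun s : ℝ => α * c ^ (-α - 1) * s) (α * c ^ (-α - 1)) s := by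
      simpa using (hasDerivAt_id s).const_mul (α * c ^ (-α - 1))
    have := h1.add h2
    exact this.hasDerivWithinAt
  · have hlip := rpow_lipschitz (p := α + 1) (by linarith) hc (hsub hs)
    have hcs : 0 < c + s := by
      have := hsub hs; rcases this with ⟨h1, h2⟩; linarith
    have heq : (-α) * (c + s) ^ (-α - 1) + α * c ^ (-α - 1)
        = (-α) * ((c + s) ^ (-(α+1)) - c ^ (-(α+1))) := by
      ring_nf
    simp only [Real.norm_eq_abs]
    rw [heq, abs_mul, abs_neg, abs_of_pos hα]
    have h3 : -(α + 1) - 1 = -α - 2 := by ring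
    rw [h3] at hlip
    calc α * |(c + s) ^ (-(α+1)) - c ^ (-(α+1))|
        ≤ α * ((α + 1) * (c - 1/2) ^ (-α - 2) * |s|) := by
          exact mul_le_mul_of_nonneg_left hlip hα.le
      _ ≤ α * ((α + 1) * (c - 1/2) ^ (-α - 2) * |t|) := by
          have h4 := habs s hs
          have hc2 : (0:ℝ) < c - 1/2 := by linarith
          have hpos : (0:ℝ) ≤ (α+1) * (c - 1/2) ^ (-α - 2) := by positivity
          exact mul_le_mul_of_nonneg_left (mul_le_mul_of_nonneg_left h4 hpos) hα.le
      _ = α * (α + 1) * (c - 1/2) ^ (-α - 2) * |t| := by ring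

lemma part1 {α : ℝ} (hα1 : 1 < α) (N : ℕ) (hN : 1 ≤ N) (k : ℤ) (hk : 2 * |k| ≤ (N : ℤ)) :
    (∑' n : ℤ, ((|k + (N : ℤ) * n| : ℝ) + 1) ^ (-α)) =
      ((|k| : ℝ) + 1) ^ (-α) + (N : ℝ) ^ (-α) *
        (hurwitzZetaSum α (1 + (1 + (k : ℝ)) / N) +
         hurwitzZetaSum α (1 + (1 - (k : ℝ)) / N)) := by
  have hNpos : (0:ℝ) < N := by exact_mod_cast Nat.pos_of_ne_zero (by omega)
  have hNZ : (1:ℤ) ≤ (N:ℤ) := by exact_mod_cast hN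
  have hkR : 2 * |(k:ℝ)| ≤ (N:ℝ) := by exact_mod_cast hk
  set x1 : ℝ := 1 + (1 + (k : ℝ)) / N with hx1def
  set x2 : ℝ := 1 + (1 - (k : ℝ)) / N with hx2def
  have habsk : |(k:ℝ)| ≤ N / 2 := by linarith
  have hx1 : 0 < x1 := by
    have h1 : -(N/2 : ℝ) ≤ (k:ℝ) := by have := neg_abs_le (k:ℝ); linarith
    have : -(1/2 : ℝ) ≤ (1 + (k:ℝ)) / N := by
      rw [le_div_iff₀ hNpos]; nlinarith
    simp only [hx1def]; linarith
  have hx2 : 0 < x2 := by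
    have h1 : (k:ℝ) ≤ N/2 := by have := le_abs_self (k:ℝ); linarith
    have : -(1/2 : ℝ) ≤ (1 - (k:ℝ)) / N := by
      rw [le_div_iff₀ hNpos]; nlinarith
    simp only [hx2def]; linarith
  set f : ℤ → ℝ := fun m => ((|k + (N : ℤ) * m| : ℝ) + 1) ^ (-α) with hfdef
  have hterm1 : ∀ n : ℕ, f ((n : ℤ) + 1) = (N:ℝ) ^ (-α) * (((n:ℝ) + x1)) ^ (-α) := by
    intro n
    have hmul : (N:ℤ) ≤ (N:ℤ) * ((n:ℤ) + 1) :=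
      le_mul_of_one_le_right (by omega) (by omega)
    have hpos : 0 < k + (N:ℤ) * ((n:ℤ) + 1) := by
      have := neg_abs_le k; omega
    have hposR : (0:ℝ) < (k:ℝ) + (N:ℝ) * ((n:ℝ) + 1) := by exact_mod_cast hpos
    simp only [hfdef]
    push_cast
    rw [abs_of_pos hposR,
      show (k:ℝ) + (N:ℝ) * ((n:ℝ) + 1) + 1 = (N:ℝ) * ((n:ℝ) + x1) from by
        rw [hx1def, mul_add (N:ℝ) (n:ℝ) (1 + (1 + (k:ℝ)) / N), mul_add (N:ℝ) 1 ((1 + (k:ℝ)) / N), mul_div_assoc', mul_div_cancel_left₀ _ hNpos.ne']; ring,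
      Real.mul_rpow hNpos.le (by positivity)]
  have hterm2 : ∀ n : ℕ, f (-((n : ℤ) + 1)) = (N:ℝ) ^ (-α) * (((n:ℝ) + x2)) ^ (-α) := by
    intro n
    have hmul : (N:ℤ) ≤ (N:ℤ) * ((n:ℤ) + 1) :=
      le_mul_of_one_le_right (by omega) (by omega)
    have hpos : 0 < (N:ℤ) * ((n:ℤ) + 1) - k := by
      have := le_abs_self k; omega
    have hposR : (0:ℝ) < (N:ℝ) * ((n:ℝ) + 1) - (k:ℝ) := by exact_mod_cast hpos
    simp only [hfdef]
    push_cast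
    rw [show (k:ℝ) + (N:ℝ) * (-((n:ℝ) + 1)) = -((N:ℝ) * ((n:ℝ) + 1) - (k:ℝ)) from by ring,
      abs_neg, abs_of_pos hposR,
      show (N:ℝ) * ((n:ℝ) + 1) - (k:ℝ) + 1 = (N:ℝ) * ((n:ℝ) + x2) from by
        rw [hx2def, mul_add (N:ℝ) (n:ℝ) (1 + (1 - (k:ℝ)) / N), mul_add (N:ℝ) 1 ((1 - (k:ℝ)) / N), mul_div_assoc', mul_div_cancel_left₀ _ hNpos.ne']; ring,
      Real.mul_rpow hNpos.le (by positivity)]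
  have hsum1' : Summable (fun n : ℕ => f ((n : ℤ) + 1)) := by
    rw [funext hterm1]
    exact (hw_summable hα1 hx1).mul_left _
  have hsum2 : Summable (fun n : ℕ => f (-((n : ℤ) + 1))) := by
    rw [funext hterm2]
    exact (hw_summable hα1 hx2).mul_left _
  have hsum1 : Summable (fun n : ℕ => f (n : ℤ)) := by
    apply (summable_nat_add_iff 1).mp
    have he : (fun n : ℕ => f (((n + 1 : ℕ)) : ℤ)) = fun n : ℕ => f ((n:ℤ) + 1) := by
      funext n; norm_num
    rw [he]; exact hsum1'
  have hsplit := tsum_of_nat_of_neg_add_one hsum1 hsum2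
  have h0 : f (0 : ℤ) = ((|k| : ℝ) + 1) ^ (-α) := by simp [hfdef]
  have heq2 : (∑' n : ℕ, f (n : ℤ)) = ((|k| : ℝ) + 1) ^ (-α) + (N:ℝ)^(-α) * hurwitzZetaSum α x1 := by
    rw [Summable.tsum_eq_zero_add hsum1, Nat.cast_zero, h0]
    congr 1
    have : (fun n : ℕ => f ((n : ℤ) + 1)) = fun n : ℕ => (N:ℝ)^(-α) * ((n:ℝ) + x1)^(-α) :=
      funext hterm1
    calc (∑' n : ℕ, f ((n+1 : ℕ) : ℤ)) = ∑' n : ℕ, (N:ℝ)^(-α) * ((n:ℝ) + x1)^(-α) := by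
          apply tsum_congr; intro n
          rw [← hterm1 n]; norm_num
      _ = (N:ℝ)^(-α) * hurwitzZetaSum α x1 := tsum_mul_left
  have heq3 : (∑' n : ℕ, f (-((n : ℤ) + 1))) = (N:ℝ)^(-α) * hurwitzZetaSum α x2 := by
    calc (∑' n : ℕ, f (-((n : ℤ)+1))) = ∑' n : ℕ, (N:ℝ)^(-α) * ((n:ℝ) + x2)^(-α) :=
          tsum_congr hterm2
      _ = (N:ℝ)^(-α) * hurwitzZetaSum α x2 := tsum_mul_left
  calc (∑' n : ℤ, f n) = (∑' n : ℕ, f (n:ℤ)) + ∑' n : ℕ, f (-((n:ℤ)+1)) := hsplit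
    _ = ((|k| : ℝ) + 1) ^ (-α) + (N : ℝ) ^ (-α) * (hurwitzZetaSum α x1 + hurwitzZetaSum α x2) := by
        rw [heq2, heq3]; ring

lemma zeta_diff {α : ℝ} (hα1 : 1 < α) {t1 t2 τ NR : ℝ} (hNR : 1 ≤ NR)
    (ht1 : t1 ∈ Set.Icc (-(1/2) : ℝ) (3/2)) (ht2 : t2 ∈ Set.Icc (-(1/2) : ℝ) (3/2))
    (hsum : t1 + t2 = 2 / NR) (hτ1 : |t1| ≤ τ) (hτ2 : |t2| ≤ τ) :
    |hurwitzZetaSum α (1 + t1) + hurwitzZetaSum α (1 + t2) - 2 * hurwitzZetaSum α 1| ≤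
      (2 * α * ∑' n : ℕ, ((n : ℝ) + 1) ^ (-(α + 1))) / NR +
      (2 * α * (α + 1) * ∑' n : ℕ, ((n : ℝ) + 1/2) ^ (-(α + 2))) * τ ^ 2 := by
  have hα0 : (0:ℝ) < α := by linarith
  have hNpos : (0:ℝ) < NR := by linarith
  have ht1l := ht1.1; have ht1r := ht1.2; have ht2l := ht2.1; have ht2r := ht2.2
  have hτ0 : 0 ≤ τ := le_trans (abs_nonneg t1) hτ1
  set g : ℕ → ℝ := fun n =>
    (((n:ℝ) + 1) + t1) ^ (-α) + (((n:ℝ) + 1) + t2) ^ (-α) - 2 * ((n:ℝ) + 1) ^ (-α) with hgdef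
  set h : ℕ → ℝ := fun n =>
    (2 * α * (α + 1) * τ ^ 2) * ((n:ℝ) + 1/2) ^ (-(α + 2)) +
    (2 * α / NR) * ((n:ℝ) + 1) ^ (-(α + 1)) with hhdef
  have hS1 : Summable (fun n : ℕ => (((n:ℝ) + 1) + t1) ^ (-α)) := by
    have := hw_summable hα1 (show (0:ℝ) < 1 + t1 by linarith)
    apply this.congr; intro n; congr 1; ring
  have hS2 : Summable (fun n : ℕ => (((n:ℝ) + 1) + t2) ^ (-α)) := by
    have := hw_summable hα1 (show (0:ℝ) < 1 + t2 by linarith)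
    apply this.congr; intro n; congr 1; ring
  have hS3 : Summable (fun n : ℕ => ((n:ℝ) + 1) ^ (-α)) := hw_summable hα1 one_pos
  have hSg : Summable g := ((hS1.add hS2).sub (hS3.mul_left 2)).congr (fun n => by
    simp [hgdef])
  have hSA : Summable (fun n : ℕ => ((n:ℝ) + 1/2) ^ (-(α + 2))) :=
    hw_summable (by linarith) (by norm_num)
  have hSB : Summable (fun n : ℕ => ((n:ℝ) + 1) ^ (-(α + 1))) :=
    hw_summable (by linarith) one_pos
  have hSh : Summable h :=
    ((hSA.mul_left (2 * α * (α + 1) * τ ^ 2)).add (hSB.mul_left (2 * α / NR))).congr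
      (fun n => by simp [hhdef])
  have e1 : hurwitzZetaSum α (1 + t1) = ∑' n : ℕ, (((n:ℝ) + 1) + t1) ^ (-α) := by
    unfold hurwitzZetaSum
    exact tsum_congr (fun n => by rw [show (n:ℝ) + (1 + t1) = ((n:ℝ) + 1) + t1 from by ring])
  have e2 : hurwitzZetaSum α (1 + t2) = ∑' n : ℕ, (((n:ℝ) + 1) + t2) ^ (-α) := by
    unfold hurwitzZetaSum
    exact tsum_congr (fun n => by rw [show (n:ℝ) + (1 + t2) = ((n:ℝ) + 1) + t2 from by ring])
  have e3 : 2 * hurwitzZetaSum α 1 = ∑' n : ℕ, 2 * ((n:ℝ) + 1) ^ (-α) := by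
    unfold hurwitzZetaSum
    exact tsum_mul_left.symm
  have hL : hurwitzZetaSum α (1 + t1) + hurwitzZetaSum α (1 + t2) - 2 * hurwitzZetaSum α 1
      = ∑' n : ℕ, g n := by
    rw [e1, e2, e3, ← Summable.tsum_add hS1 hS2, ← Summable.tsum_sub (hS1.add hS2) (hS3.mul_left 2)]
  have key : ∀ n : ℕ, |g n| ≤ h n := by
    intro n
    have hc : (1:ℝ) ≤ (n:ℝ) + 1 := by
      have := Nat.cast_nonneg (α := ℝ) n; linarith
    set c : ℝ := (n:ℝ) + 1 with hcdef
    have e : g n = ((c + t1) ^ (-α) - c ^ (-α) + α * c ^ (-α-1) * t1)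
        + ((c + t2) ^ (-α) - c ^ (-α) + α * c ^ (-α-1) * t2)
        - α * c ^ (-α-1) * (t1 + t2) := by
      simp only [hgdef, hcdef]; ring
    have hT1 := taylor2 hα0 hc ht1
    have hT2 := taylor2 hα0 hc ht2
    have ht1sq : t1 ^ 2 ≤ τ ^ 2 := by
      rw [← sq_abs t1]; exact pow_le_pow_left₀ (abs_nonneg t1) hτ1 2
    have ht2sq : t2 ^ 2 ≤ τ ^ 2 := by
      rw [← sq_abs t2]; exact pow_le_pow_left₀ (abs_nonneg t2) hτ2 2
    have hM : (0:ℝ) ≤ α * (α + 1) * (c - 1/2) ^ (-α - 2) :=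
      mul_nonneg (by positivity) (Real.rpow_nonneg (by linarith) _)
    have hc0 : (0:ℝ) ≤ c := by linarith
    have hZ : |α * c ^ (-α-1) * (t1 + t2)| = (2 * α / NR) * c ^ (-α-1) := by
      rw [hsum, abs_of_nonneg (mul_nonneg (mul_nonneg hα0.le (Real.rpow_nonneg hc0 _))
        (by positivity))]
      field_simp
    have hcc : c - 1/2 = (n:ℝ) + 1/2 := by rw [hcdef]; ring
    have hb1 : |(c + t1) ^ (-α) - c ^ (-α) + α * c ^ (-α-1) * t1|
        ≤ α * (α + 1) * ((n:ℝ) + 1/2) ^ (-(α+2)) * τ ^ 2 := by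
      rw [← hcc, show -(α+2) = -α - 2 from by ring]
      calc _ ≤ α * (α + 1) * (c - 1/2) ^ (-α - 2) * t1 ^ 2 := hT1
        _ ≤ _ := mul_le_mul_of_nonneg_left ht1sq hM
    have hb2 : |(c + t2) ^ (-α) - c ^ (-α) + α * c ^ (-α-1) * t2|
        ≤ α * (α + 1) * ((n:ℝ) + 1/2) ^ (-(α+2)) * τ ^ 2 := by
      rw [← hcc, show -(α+2) = -α - 2 from by ring]
      calc _ ≤ α * (α + 1) * (c - 1/2) ^ (-α - 2) * t2 ^ 2 := hT2
        _ ≤ _ := mul_le_mul_of_nonneg_left ht2sq hM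
    have hstep : |g n| ≤ |(c + t1) ^ (-α) - c ^ (-α) + α * c ^ (-α-1) * t1|
        + |(c + t2) ^ (-α) - c ^ (-α) + α * c ^ (-α-1) * t2|
        + |α * c ^ (-α-1) * (t1 + t2)| := by
      rw [e]
      exact (abs_sub _ _).trans (by gcongr; exact abs_add_le _ _)
    have hceq : c ^ (-α-1) = ((n:ℝ) + 1) ^ (-(α+1)) := by
      rw [hcdef, show -(α+1) = -α - 1 from by ring]
    rw [hZ] at hstep
    calc |g n| ≤ _ := hstep
      _ ≤ α * (α + 1) * ((n:ℝ) + 1/2) ^ (-(α+2)) * τ ^ 2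
          + α * (α + 1) * ((n:ℝ) + 1/2) ^ (-(α+2)) * τ ^ 2
          + (2 * α / NR) * c ^ (-α-1) :=
        add_le_add (add_le_add hb1 hb2) le_rfl
      _ = h n := by rw [hceq]; simp only [hhdef]; ring
  have htsumh : (∑' n : ℕ, h n) = (2 * α * (α + 1) * τ ^ 2) * (∑' n : ℕ, ((n:ℝ) + 1/2) ^ (-(α+2)))
      + (2 * α / NR) * (∑' n : ℕ, ((n:ℝ) + 1) ^ (-(α+1))) := by
    simp only [hhdef]
    rw [Summable.tsum_add (hSA.mul_left _) (hSB.mul_left _), tsum_mul_left, tsum_mul_left]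
  calc |hurwitzZetaSum α (1 + t1) + hurwitzZetaSum α (1 + t2) - 2 * hurwitzZetaSum α 1|
      = |∑' n : ℕ, g n| := by rw [hL]
    _ ≤ ∑' n : ℕ, |g n| := by
        have hn : Summable (fun n : ℕ => ‖g n‖) := by simpa [Real.norm_eq_abs] using hSg.abs
        simpa [Real.norm_eq_abs] using norm_tsum_le_tsum_norm hn
    _ ≤ ∑' n : ℕ, h n := Summable.tsum_le_tsum key hSg.abs hSh
    _ = _ := by rw [htsumh]; ring

set_option maxHeartbeats 2000000 in
/-- exact Hurwitz-zeta representation of the `N`-deformation for the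
power-law circle spectrum, and the resulting expansion
`[λ_k^a|c_k|^{2b}]_N = λ_k^a|c_k|^{2b} + 2ζ(α)N^{-α} + O(N^{-α-1}) + O(τ²N^{-α})`
uniformly over `|k| ≤ N/2`, where `ζ(α) = ζ(α,1)` is the Riemann zeta value and
`τ = (|k|+1)/N`. -/
theorem ndeformation_hurwitz (ν κ a b α : ℝ)
    (hν : 1 < ν) (hκ : 0 < κ) (ha : 0 ≤ a) (hb : 0 ≤ b)
    (hα : α = a * ν + b * (κ + 1)) (hα1 : 1 < α) :
    (∀ N : ℕ, 1 ≤ N → ∀ k : ℤ, 2 * |k| ≤ (N : ℤ) →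
      (∑' n : ℤ, plTerm ν κ a b (k + (N : ℤ) * n)) =
        plTerm ν κ a b k + (N : ℝ) ^ (-α) *
          (hurwitzZetaSum α (1 + (1 + (k : ℝ)) / N) +
           hurwitzZetaSum α (1 + (1 - (k : ℝ)) / N))) ∧
    ∃ C : ℝ, 0 < C ∧ ∀ N : ℕ, 1 ≤ N → ∀ k : ℤ, 2 * |k| ≤ (N : ℤ) →
      |(∑' n : ℤ, plTerm ν κ a b (k + (N : ℤ) * n)) - plTerm ν κ a b k -
          2 * hurwitzZetaSum α 1 * (N : ℝ) ^ (-α)| ≤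
        C * ((N : ℝ) ^ (-α - 1) + (((|k| : ℝ) + 1) / N) ^ 2 * (N : ℝ) ^ (-α)) := by
  have hα0 : (0:ℝ) < α := by linarith
  have hpt : ∀ l : ℤ, plTerm ν κ a b l = (|(l:ℝ)| + 1) ^ (-α) := by
    intro l
    have hx : (0:ℝ) < |(l:ℝ)| + 1 := by positivity
    unfold plTerm plLam plCsq
    rw [← Real.rpow_mul hx.le, ← Real.rpow_mul hx.le, ← Real.rpow_add hx]
    congr 1
    rw [hα]; ring
  have hmain : ∀ N : ℕ, 1 ≤ N → ∀ k : ℤ, 2 * |k| ≤ (N : ℤ) →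
      (∑' n : ℤ, plTerm ν κ a b (k + (N : ℤ) * n)) =
        plTerm ν κ a b k + (N : ℝ) ^ (-α) *
          (hurwitzZetaSum α (1 + (1 + (k : ℝ)) / N) +
           hurwitzZetaSum α (1 + (1 - (k : ℝ)) / N)) := by
    intro N hN k hk
    have hre : (∑' n : ℤ, plTerm ν κ a b (k + (N : ℤ) * n)) =
        ∑' n : ℤ, ((|k + (N : ℤ) * n| : ℝ) + 1) ^ (-α) := by
      apply tsum_congr
      intro n
      rw [hpt]
      congr 2
      push_cast
      ring
    rw [hre, hpt k, part1 hα1 N hN k hk]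
  refine ⟨hmain, ?_⟩
  set SB : ℝ := ∑' n : ℕ, ((n:ℝ) + 1) ^ (-(α + 1)) with hSB
  set SA : ℝ := ∑' n : ℕ, ((n:ℝ) + 1/2) ^ (-(α + 2)) with hSA
  have hSB0 : 0 ≤ SB := tsum_nonneg (fun n => Real.rpow_nonneg (by positivity) _)
  have hSA0 : 0 ≤ SA := tsum_nonneg (fun n => Real.rpow_nonneg (by positivity) _)
  refine ⟨2 * α * SB + 2 * α * (α + 1) * SA + 1, by positivity, ?_⟩
  intro N hN k hk
  have hNpos : (0:ℝ) < N := by exact_mod_cast Nat.pos_of_ne_zero (by omega)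
  have hNR : (1:ℝ) ≤ (N:ℝ) := by exact_mod_cast hN
  have hkR : 2 * |(k:ℝ)| ≤ (N:ℝ) := by exact_mod_cast hk
  set t1 : ℝ := (1 + (k:ℝ)) / N with ht1def
  set t2 : ℝ := (1 - (k:ℝ)) / N with ht2def
  set τ : ℝ := (|(k:ℝ)| + 1) / N with hτdef
  have hkl : -((N:ℝ)/2) ≤ (k:ℝ) := by have := neg_abs_le (k:ℝ); linarith
  have hkr : (k:ℝ) ≤ (N:ℝ)/2 := by have := le_abs_self (k:ℝ); linarith
  have ht1 : t1 ∈ Set.Icc (-(1/2) : ℝ) (3/2) := by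
    constructor
    · rw [ht1def, le_div_iff₀ hNpos]; nlinarith
    · rw [ht1def, div_le_iff₀ hNpos]; nlinarith
  have ht2 : t2 ∈ Set.Icc (-(1/2) : ℝ) (3/2) := by
    constructor
    · rw [ht2def, le_div_iff₀ hNpos]; nlinarith
    · rw [ht2def, div_le_iff₀ hNpos]; nlinarith
  have hsum12 : t1 + t2 = 2 / N := by
    rw [ht1def, ht2def]
    field_simp
    ring
  have hτ1 : |t1| ≤ τ := by
    rw [ht1def, hτdef, abs_div, abs_of_pos hNpos]
    gcongr
    calc |1 + (k:ℝ)| ≤ |(1:ℝ)| + |(k:ℝ)| := abs_add_le _ _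
      _ = |(k:ℝ)| + 1 := by rw [abs_one]; ring
  have hτ2 : |t2| ≤ τ := by
    rw [ht2def, hτdef, abs_div, abs_of_pos hNpos]
    gcongr
    calc |1 - (k:ℝ)| ≤ |(1:ℝ)| + |(k:ℝ)| := abs_sub _ _
      _ = |(k:ℝ)| + 1 := by rw [abs_one]; ring
  have hzd := zeta_diff hα1 hNR ht1 ht2 hsum12 hτ1 hτ2
  rw [hmain N hN k hk]
  have hrw : plTerm ν κ a b k + (N : ℝ) ^ (-α) *
        (hurwitzZetaSum α (1 + t1) + hurwitzZetaSum α (1 + t2)) - plTerm ν κ a b k -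
        2 * hurwitzZetaSum α 1 * (N : ℝ) ^ (-α)
      = (N : ℝ) ^ (-α) * (hurwitzZetaSum α (1 + t1) + hurwitzZetaSum α (1 + t2)
          - 2 * hurwitzZetaSum α 1) := by ring
  rw [hrw, abs_mul, abs_of_pos (Real.rpow_pos_of_pos hNpos (-α))]
  have hpow : (N:ℝ) ^ (-α - 1) = (N:ℝ) ^ (-α) / N := by
    rw [show -α - 1 = -α + (-1) from by ring, Real.rpow_add hNpos, Real.rpow_neg_one]
    ring
  have hNa : (0:ℝ) < (N:ℝ) ^ (-α) := Real.rpow_pos_of_pos hNpos _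
  have hτ0 : 0 ≤ τ := le_trans (abs_nonneg t1) hτ1
  calc (N:ℝ) ^ (-α) * |hurwitzZetaSum α (1 + t1) + hurwitzZetaSum α (1 + t2)
        - 2 * hurwitzZetaSum α 1|
      ≤ (N:ℝ) ^ (-α) * ((2 * α * SB) / N + (2 * α * (α + 1) * SA) * τ ^ 2) :=
        mul_le_mul_of_nonneg_left hzd hNa.le
    _ = (2 * α * SB) * ((N:ℝ) ^ (-α - 1)) + (2 * α * (α + 1) * SA) * (τ ^ 2 * (N:ℝ) ^ (-α)) := by
        rw [hpow]; ring
    _ ≤ (2 * α * SB + 2 * α * (α + 1) * SA + 1) * ((N:ℝ) ^ (-α - 1) + τ ^ 2 * (N:ℝ) ^ (-α)) := by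
        have h1 : (0:ℝ) ≤ (N:ℝ) ^ (-α - 1) := (Real.rpow_pos_of_pos hNpos _).le
        have h2 : (0:ℝ) ≤ τ ^ 2 * (N:ℝ) ^ (-α) := by positivity
        nlinarith [mul_nonneg (mul_nonneg hα0.le hSB0) h2,
          mul_nonneg (mul_nonneg (mul_nonneg hα0.le (by linarith : (0:ℝ) ≤ α + 1)) hSA0) h1]

end
end

section
/- Fix ν > 1 and κ > 0, and for τ ∈ (0,1) define the symmetrized Hurwitz zeta ζ_τ^{(α)} = ζ(α,τ) + ζ(α,1−τ) and h*(τ) = ζ_τ^{(ν+κ+1)} ζ_τ^{(ν)} / ( ζ_τ^{(κ+1)} ζ_τ^{(2ν)} ) (the N → ∞ limit of the optimal spectral algorithm of the noiseless Circle model). Then for every τ ∈ (0,1): h*(τ) < 1 if κ+1 < ν, h*(τ) = 1 if κ+1 = ν, and h*(τ) > 1 if κ+1 > ν. -/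
noncomputable section

/-- The symmetrized Hurwitz zeta `ζ_τ^{(α)} = ζ(α,τ) + ζ(α,1−τ)`. -/
def symHurwitzZeta (α τ : ℝ) : ℝ := hurwitzZetaSum α τ + hurwitzZetaSum α (1 - τ)

namespace CircleOverlearning

lemma summable_hzs {α x : ℝ} (hα : 1 < α) (hx : 0 < x) :
    Summable (fun n : ℕ => ((n : ℝ) + x) ^ (-α)) := by
  refine ((Real.summable_one_div_nat_add_rpow x α).mpr hα).congr fun n => ?_
  have hp : (0:ℝ) < (n:ℝ) + x := by positivity
  rw [Real.rpow_neg hp.le, abs_of_pos hp, one_div]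

lemma aux_lt {a c p q : ℝ} (ha : 0 < a) (hc : 0 < c) (hac : a < c) (hpq : p < q) :
    a ^ (-p) * c ^ (-q) < c ^ (-p) * a ^ (-q) := by
  have hqp : a ^ (q - p) < c ^ (q - p) := Real.rpow_lt_rpow ha.le hac (by linarith)
  have ea : a ^ (-p) = a ^ (-q) * a ^ (q - p) := by
    rw [← Real.rpow_add ha]; congr 1; ring
  have ec : c ^ (-p) = c ^ (-q) * c ^ (q - p) := by
    rw [← Real.rpow_add hc]; congr 1; ring
  have h1 : 0 < a ^ (-q) := Real.rpow_pos_of_pos ha _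
  have h2 : 0 < c ^ (-q) := Real.rpow_pos_of_pos hc _
  rw [ea, ec]
  nlinarith [mul_lt_mul_of_pos_left hqp (mul_pos h1 h2)]

lemma factor_pos {a c p q : ℝ} (ha : 0 < a) (hc : 0 < c) (h0q : 0 < q) (hpq : p < q)
    (hne : a ≠ c) :
    0 < (c ^ (-p) * a ^ (-q) - a ^ (-p) * c ^ (-q)) * (a ^ (-q) - c ^ (-q)) := by
  rcases hne.lt_or_gt with h | h
  · exact mul_pos (sub_pos.2 (aux_lt ha hc h hpq))
      (sub_pos.2 (Real.rpow_lt_rpow_of_neg ha h (by linarith)))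
  · exact mul_pos_of_neg_of_neg (sub_neg.2 (aux_lt hc ha h hpq))
      (sub_neg.2 (Real.rpow_lt_rpow_of_neg hc h (by linarith)))

lemma factor_nonneg {a c p q : ℝ} (ha : 0 < a) (hc : 0 < c) (h0q : 0 < q) (hpq : p < q) :
    0 ≤ (c ^ (-p) * a ^ (-q) - a ^ (-p) * c ^ (-q)) * (a ^ (-q) - c ^ (-q)) := by
  rcases eq_or_ne a c with h | h
  · subst h; simp
  · exact (factor_pos ha hc h0q hpq h).le

lemma factor_neg {a c p q : ℝ} (ha : 0 < a) (hc : 0 < c) (h0q : 0 < q) (hqp : q < p)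
    (hne : a ≠ c) :
    (c ^ (-p) * a ^ (-q) - a ^ (-p) * c ^ (-q)) * (a ^ (-q) - c ^ (-q)) < 0 := by
  rcases hne.lt_or_gt with h | h
  · have h1 := aux_lt (p := q) (q := p) ha hc h hqp
    have h2 : c ^ (-q) < a ^ (-q) := Real.rpow_lt_rpow_of_neg ha h (by linarith)
    have hf1 : c ^ (-p) * a ^ (-q) - a ^ (-p) * c ^ (-q) < 0 := by nlinarith [h1]
    exact mul_neg_of_neg_of_pos hf1 (sub_pos.2 h2)
  · have h1 := aux_lt (p := q) (q := p) hc ha h hqp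
    have h2 : a ^ (-q) < c ^ (-q) := Real.rpow_lt_rpow_of_neg hc h (by linarith)
    have hf1 : 0 < c ^ (-p) * a ^ (-q) - a ^ (-p) * c ^ (-q) := by nlinarith [h1]
    exact mul_neg_of_pos_of_neg hf1 (sub_neg.2 h2)

lemma factor_nonpos {a c p q : ℝ} (ha : 0 < a) (hc : 0 < c) (h0q : 0 < q) (hqp : q < p) :
    (c ^ (-p) * a ^ (-q) - a ^ (-p) * c ^ (-q)) * (a ^ (-q) - c ^ (-q)) ≤ 0 := by
  rcases eq_or_ne a c with h | h
  · subst h; simp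
  · exact (factor_neg ha hc h0q hqp h).le

lemma expanders {a p q : ℝ} (ha : 0 < a) :
    a ^ (-(p + q)) = a ^ (-p) * a ^ (-q) ∧ a ^ (-(2 * q)) = a ^ (-q) * a ^ (-q) := by
  constructor
  · rw [← Real.rpow_add ha]; congr 1; ring
  · rw [← Real.rpow_add ha]; congr 1; ring

lemma pt_le {a c p q : ℝ} (ha : 0 < a) (hc : 0 < c) (h0q : 0 < q) (hpq : p < q) :
    a ^ (-(p + q)) * c ^ (-q) + a ^ (-q) * c ^ (-(p + q)) ≤
      a ^ (-p) * c ^ (-(2 * q)) + a ^ (-(2 * q)) * c ^ (-p) := by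
  obtain ⟨ea1, ea2⟩ := expanders (p := p) (q := q) ha
  obtain ⟨ec1, ec2⟩ := expanders (p := p) (q := q) hc
  rw [ea1, ea2, ec1, ec2]
  nlinarith [factor_nonneg ha hc h0q hpq]

lemma pt_lt {a c p q : ℝ} (ha : 0 < a) (hc : 0 < c) (h0q : 0 < q) (hpq : p < q)
    (hne : a ≠ c) :
    a ^ (-(p + q)) * c ^ (-q) + a ^ (-q) * c ^ (-(p + q)) <
      a ^ (-p) * c ^ (-(2 * q)) + a ^ (-(2 * q)) * c ^ (-p) := by
  obtain ⟨ea1, ea2⟩ := expanders (p := p) (q := q) ha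
  obtain ⟨ec1, ec2⟩ := expanders (p := p) (q := q) hc
  rw [ea1, ea2, ec1, ec2]
  nlinarith [factor_pos ha hc h0q hpq hne]

lemma pt_le' {a c p q : ℝ} (ha : 0 < a) (hc : 0 < c) (h0q : 0 < q) (hqp : q < p) :
    a ^ (-p) * c ^ (-(2 * q)) + a ^ (-(2 * q)) * c ^ (-p) ≤
      a ^ (-(p + q)) * c ^ (-q) + a ^ (-q) * c ^ (-(p + q)) := by
  obtain ⟨ea1, ea2⟩ := expanders (p := p) (q := q) ha
  obtain ⟨ec1, ec2⟩ := expanders (p := p) (q := q) hc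
  rw [ea1, ea2, ec1, ec2]
  nlinarith [factor_nonpos ha hc h0q hqp]

lemma pt_lt' {a c p q : ℝ} (ha : 0 < a) (hc : 0 < c) (h0q : 0 < q) (hqp : q < p)
    (hne : a ≠ c) :
    a ^ (-p) * c ^ (-(2 * q)) + a ^ (-(2 * q)) * c ^ (-p) <
      a ^ (-(p + q)) * c ^ (-q) + a ^ (-q) * c ^ (-(p + q)) := by
  obtain ⟨ea1, ea2⟩ := expanders (p := p) (q := q) ha
  obtain ⟨ec1, ec2⟩ := expanders (p := p) (q := q) hc
  rw [ea1, ea2, ec1, ec2]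
  nlinarith [factor_neg ha hc h0q hqp hne]

set_option maxHeartbeats 800000 in
/-- Chebyshev-type comparison of products of sums from a pointwise symmetrized inequality. -/
lemma sum_pair_lt {f g F G : ℕ → ℝ}
    (hf : Summable f) (hg : Summable g) (hF : Summable F) (hG : Summable G)
    (hf0 : ∀ i, 0 ≤ f i) (hg0 : ∀ i, 0 ≤ g i) (hF0 : ∀ i, 0 ≤ F i) (hG0 : ∀ i, 0 ≤ G i)
    (hle : ∀ i j, f i * g j + g i * f j ≤ F i * G j + G i * F j)
    (i0 j0 : ℕ) (hlt : f i0 * g j0 + g i0 * f j0 < F i0 * G j0 + G i0 * F j0) :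
    (∑' i, f i) * (∑' i, g i) < (∑' i, F i) * (∑' i, G i) := by
  have S1 : Summable (fun z : ℕ × ℕ => f z.1 * g z.2) := hf.mul_of_nonneg hg hf0 hg0
  have S2 : Summable (fun z : ℕ × ℕ => g z.1 * f z.2) := hg.mul_of_nonneg hf hg0 hf0
  have S3 : Summable (fun z : ℕ × ℕ => F z.1 * G z.2) := hF.mul_of_nonneg hG hF0 hG0
  have S4 : Summable (fun z : ℕ × ℕ => G z.1 * F z.2) := hG.mul_of_nonneg hF hG0 hF0
  have E1 := Summable.tsum_mul_tsum hf hg S1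
  have E2 := Summable.tsum_mul_tsum hg hf S2
  have E3 := Summable.tsum_mul_tsum hF hG S3
  have E4 := Summable.tsum_mul_tsum hG hF S4
  have key : (∑' z : ℕ × ℕ, (f z.1 * g z.2 + g z.1 * f z.2)) <
      ∑' z : ℕ × ℕ, (F z.1 * G z.2 + G z.1 * F z.2) :=
    Summable.tsum_lt_tsum (f := fun z : ℕ × ℕ => f z.1 * g z.2 + g z.1 * f z.2)
      (g := fun z : ℕ × ℕ => F z.1 * G z.2 + G z.1 * F z.2) (i := (i0, j0))
      (fun z => hle z.1 z.2) hlt (S1.add S2) (S3.add S4)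
  rw [Summable.tsum_add S1 S2, Summable.tsum_add S3 S4] at key
  nlinarith [E1, E2, E3, E4, key]

/-- The interleaved sequence `τ, 1-τ, 1+τ, 2-τ, …`. -/
def cseq (τ : ℝ) (n : ℕ) : ℝ := (n / 2 : ℕ) + (if Even n then τ else 1 - τ)

lemma cseq_even (τ : ℝ) (k : ℕ) : cseq τ (2 * k) = (k : ℝ) + τ := by
  have h : (2 * k) / 2 = k := by omega
  simp [cseq, h, even_two_mul]

lemma cseq_odd (τ : ℝ) (k : ℕ) : cseq τ (2 * k + 1) = (k : ℝ) + (1 - τ) := by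
  have h : (2 * k + 1) / 2 = k := by omega
  have h2 : ¬ Even (2 * k + 1) := by simp [Nat.even_add_one, parity_simps]
  simp [cseq, h, h2]

lemma cseq_pos {τ : ℝ} (h0 : 0 < τ) (h1 : τ < 1) (n : ℕ) : 0 < cseq τ n := by
  unfold cseq
  rcases Nat.even_or_odd n with h | h
  · rw [if_pos h]; positivity
  · rw [if_neg (Nat.not_even_iff_odd.mpr h)]
    have : (0:ℝ) < 1 - τ := by linarith
    positivity

lemma cseq_summable {τ α : ℝ} (h0 : 0 < τ) (h1 : τ < 1) (hα : 1 < α) :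
    Summable (fun n => cseq τ n ^ (-α)) := by
  have he : Summable (fun k : ℕ => cseq τ (2 * k) ^ (-α)) :=
    (summable_hzs hα h0).congr fun k => by rw [cseq_even]
  have ho : Summable (fun k : ℕ => cseq τ (2 * k + 1) ^ (-α)) :=
    (summable_hzs hα (by linarith : (0:ℝ) < 1 - τ)).congr fun k => by rw [cseq_odd]
  exact he.even_add_odd ho

lemma sym_eq {τ α : ℝ} (h0 : 0 < τ) (h1 : τ < 1) (hα : 1 < α) :
    symHurwitzZeta α τ = ∑' n, cseq τ n ^ (-α) := by
  have he : Summable (fun k : ℕ => cseq τ (2 * k) ^ (-α)) :=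
    (summable_hzs hα h0).congr fun k => by rw [cseq_even]
  have ho : Summable (fun k : ℕ => cseq τ (2 * k + 1) ^ (-α)) :=
    (summable_hzs hα (by linarith : (0:ℝ) < 1 - τ)).congr fun k => by rw [cseq_odd]
  have h2 := tsum_even_add_odd (f := fun n => cseq τ n ^ (-α)) he ho
  rw [← h2, symHurwitzZeta, hurwitzZetaSum, hurwitzZetaSum]
  congr 1
  · exact tsum_congr fun k => by simp only [cseq_even]
  · exact tsum_congr fun k => by simp only [cseq_odd]

lemma sym_pos {τ α : ℝ} (h0 : 0 < τ) (h1 : τ < 1) (hα : 1 < α) :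
    0 < symHurwitzZeta α τ := by
  rw [sym_eq h0 h1 hα]
  exact Summable.tsum_pos (cseq_summable h0 h1 hα)
    (fun n => (Real.rpow_pos_of_pos (cseq_pos h0 h1 n) _).le) 0
    (Real.rpow_pos_of_pos (cseq_pos h0 h1 0) _)

lemma key_lt {c : ℕ → ℝ} (hc : ∀ n, 0 < c n) {p q : ℝ} (hp : 1 < p) (hq : 1 < q)
    (hpq : p < q) (hsum : ∀ α : ℝ, 1 < α → Summable fun n => c n ^ (-α))
    {i0 j0 : ℕ} (hne : c i0 ≠ c j0) :
    (∑' n, c n ^ (-(p + q))) * (∑' n, c n ^ (-q)) <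
      (∑' n, c n ^ (-p)) * (∑' n, c n ^ (-(2 * q))) := by
  refine sum_pair_lt (hsum _ (by linarith)) (hsum _ hq) (hsum _ hp) (hsum _ (by linarith))
    (fun i => (Real.rpow_pos_of_pos (hc i) _).le) (fun i => (Real.rpow_pos_of_pos (hc i) _).le)
    (fun i => (Real.rpow_pos_of_pos (hc i) _).le) (fun i => (Real.rpow_pos_of_pos (hc i) _).le)
    (fun i j => pt_le (hc i) (hc j) (by linarith) hpq) i0 j0
    (pt_lt (hc i0) (hc j0) (by linarith) hpq hne)

lemma key_gt {c : ℕ → ℝ} (hc : ∀ n, 0 < c n) {p q : ℝ} (hp : 1 < p) (hq : 1 < q)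
    (hpq : q < p) (hsum : ∀ α : ℝ, 1 < α → Summable fun n => c n ^ (-α))
    {i0 j0 : ℕ} (hne : c i0 ≠ c j0) :
    (∑' n, c n ^ (-p)) * (∑' n, c n ^ (-(2 * q))) <
      (∑' n, c n ^ (-(p + q))) * (∑' n, c n ^ (-q)) := by
  refine sum_pair_lt (hsum _ hp) (hsum _ (by linarith)) (hsum _ (by linarith)) (hsum _ hq)
    (fun i => (Real.rpow_pos_of_pos (hc i) _).le) (fun i => (Real.rpow_pos_of_pos (hc i) _).le)
    (fun i => (Real.rpow_pos_of_pos (hc i) _).le) (fun i => (Real.rpow_pos_of_pos (hc i) _).le)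
    (fun i j => pt_le' (hc i) (hc j) (by linarith) hpq) i0 j0
    (pt_lt' (hc i0) (hc j0) (by linarith) hpq hne)

end CircleOverlearning

open CircleOverlearning in
/-- the overlearning transition for the `N → ∞` optimal algorithm of the
noiseless Circle model: `h*(τ) = ζ_τ^{(ν+κ+1)} ζ_τ^{(ν)} / (ζ_τ^{(κ+1)} ζ_τ^{(2ν)})`
satisfies `h*(τ) < 1` iff `κ+1 < ν`, `= 1` iff `κ+1 = ν`, `> 1` iff `κ+1 > ν`, for every
`τ ∈ (0,1)`. -/
theorem circle_overlearning_transition (ν κ : ℝ) (hν : 1 < ν) (hκ : 0 < κ) :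
    ∀ τ ∈ Set.Ioo (0 : ℝ) 1,
      (κ + 1 < ν →
        symHurwitzZeta (ν + κ + 1) τ * symHurwitzZeta ν τ /
          (symHurwitzZeta (κ + 1) τ * symHurwitzZeta (2 * ν) τ) < 1) ∧
      (κ + 1 = ν →
        symHurwitzZeta (ν + κ + 1) τ * symHurwitzZeta ν τ /
          (symHurwitzZeta (κ + 1) τ * symHurwitzZeta (2 * ν) τ) = 1) ∧
      (ν < κ + 1 →
        1 < symHurwitzZeta (ν + κ + 1) τ * symHurwitzZeta ν τ /
          (symHurwitzZeta (κ + 1) τ * symHurwitzZeta (2 * ν) τ)) := by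
  intro τ hτ
  obtain ⟨h0, h1⟩ := hτ
  have hcpos : ∀ n, 0 < cseq τ n := cseq_pos h0 h1
  have hsum : ∀ α : ℝ, 1 < α → Summable fun n => cseq τ n ^ (-α) :=
    fun α hα => cseq_summable h0 h1 hα
  have e0 : cseq τ 0 = τ := by simpa using cseq_even τ 0
  have e2 : cseq τ 2 = 1 + τ := by
    have := cseq_even τ 1
    norm_num at this
    exact this
  have hne : cseq τ 0 ≠ cseq τ 2 := by rw [e0, e2]; intro h; linarith
  have hp1 : (1:ℝ) < κ + 1 := by linarith
  have h2ν : (1:ℝ) < 2 * ν := by linarith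
  have hνκ : (1:ℝ) < ν + κ + 1 := by linarith
  have hdenom : 0 < symHurwitzZeta (κ + 1) τ * symHurwitzZeta (2 * ν) τ :=
    mul_pos (sym_pos h0 h1 hp1) (sym_pos h0 h1 h2ν)
  have enum : symHurwitzZeta (ν + κ + 1) τ = ∑' n, cseq τ n ^ (-(κ + 1 + ν)) := by
    rw [sym_eq h0 h1 hνκ]
    exact tsum_congr fun n => by congr 1; ring
  refine ⟨?_, ?_, ?_⟩
  · intro h
    rw [div_lt_one hdenom, enum, sym_eq h0 h1 hν, sym_eq h0 h1 hp1, sym_eq h0 h1 h2ν]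
    exact key_lt hcpos hp1 hν h hsum hne
  · intro h
    have e : ν + κ + 1 = 2 * ν := by linarith
    rw [e, h]
    rw [mul_comm (symHurwitzZeta (2 * ν) τ) (symHurwitzZeta ν τ)]
    exact div_self (mul_pos (sym_pos h0 h1 hν) (sym_pos h0 h1 h2ν)).ne'
  · intro h
    rw [one_lt_div hdenom, enum, sym_eq h0 h1 hν, sym_eq h0 h1 hp1, sym_eq h0 h1 h2ν]
    exact key_gt hcpos hp1 hν h hsum hne

end
end

section
/- For every τ ∈ (0,1), the function f(α) = ζ(α,τ) + ζ(α,1−τ) is strictly log-convex on (1,∞): it is twice differentiable and satisfies f(α) f''(α) > (f'(α))² for all α > 1. -/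
noncomputable section

namespace SymHZ

open Real

/-- log-power weighted Hurwitz sum. -/
def S (m : ℕ) (α x : ℝ) : ℝ := ∑' n : ℕ, (Real.log ((n : ℝ) + x)) ^ m * ((n : ℝ) + x) ^ (-α)

lemma S_zero (α x : ℝ) : S 0 α x = hurwitzZetaSum α x := by
  simp [S, hurwitzZetaSum]

lemma summable_abs (m : ℕ) {x α : ℝ} (hx : 0 < x) (hα : 1 < α) :
    Summable (fun n : ℕ => |Real.log ((n : ℝ) + x)| ^ m * ((n : ℝ) + x) ^ (-α)) := by
  rw [← summable_nat_add_iff 1]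
  have hε : 0 < (α - 1) / (2 * ((m : ℝ) + 1)) := by
    apply div_pos (by linarith)
    positivity
  set ε : ℝ := (α - 1) / (2 * ((m : ℝ) + 1)) with hεdef
  set s : ℝ := (α + 1) / 2 with hsdef
  have hs : 1 < s := by rw [hsdef]; linarith
  have hmaj : Summable (fun n : ℕ => ε⁻¹ ^ m * ((n : ℝ) + (1 + x)) ^ (-s)) := by
    apply Summable.mul_left
    have h := (Real.summable_one_div_nat_add_rpow (1 + x) s).mpr hs
    refine h.congr fun n => ?_
    have hpos : (0 : ℝ) < (n : ℝ) + (1 + x) := by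
      have := Nat.cast_nonneg (α := ℝ) n; linarith
    rw [abs_of_pos hpos, Real.rpow_neg hpos.le, one_div]
  refine Summable.of_nonneg_of_le (fun n => by positivity) (fun n => ?_) hmaj
  have ht : ((n + 1 : ℕ) : ℝ) + x = (n : ℝ) + (1 + x) := by push_cast; ring
  rw [ht]
  set t : ℝ := (n : ℝ) + (1 + x) with htdef
  have ht1 : (1 : ℝ) ≤ t := by
    have := Nat.cast_nonneg (α := ℝ) n; rw [htdef]; linarith
  have ht0 : (0 : ℝ) < t := lt_of_lt_of_le one_pos ht1
  have hlog : |Real.log t| = Real.log t := abs_of_nonneg (Real.log_nonneg ht1)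
  have h2 : |Real.log t| ^ m ≤ (t ^ ε / ε) ^ m := by
    rw [hlog]
    exact pow_le_pow_left₀ (Real.log_nonneg ht1) (Real.log_le_rpow_div ht0.le hε) m
  have h3 : (t ^ ε / ε) ^ m = ε⁻¹ ^ m * (t ^ ε) ^ m := by
    rw [div_pow, div_eq_mul_inv, ← inv_pow, mul_comm]
  have h4 : (t ^ ε) ^ m = t ^ (ε * m) := by
    rw [← Real.rpow_natCast (t ^ ε) m, ← Real.rpow_mul ht0.le]
  have h5 : t ^ (ε * m) * t ^ (-α) = t ^ (ε * m - α) := by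
    rw [← Real.rpow_add ht0]; ring_nf
  have hexp : ε * m - α ≤ -s := by
    have hm : (0 : ℝ) ≤ (m : ℝ) := Nat.cast_nonneg m
    have key : ε * (m : ℝ) ≤ (α - 1) / 2 := by
      rw [hεdef, div_mul_eq_mul_div, div_le_div_iff₀ (by positivity) (by norm_num)]
      nlinarith
    rw [hsdef]; linarith
  have h6 : t ^ (ε * m - α) ≤ t ^ (-s) := Real.rpow_le_rpow_of_exponent_le ht1 hexp
  calc |Real.log t| ^ m * t ^ (-α)
      ≤ (t ^ ε / ε) ^ m * t ^ (-α) := by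
        apply mul_le_mul_of_nonneg_right h2 (Real.rpow_nonneg ht0.le _)
    _ = ε⁻¹ ^ m * (t ^ (ε * m) * t ^ (-α)) := by rw [h3, h4, mul_assoc]
    _ = ε⁻¹ ^ m * t ^ (ε * m - α) := by rw [h5]
    _ ≤ ε⁻¹ ^ m * t ^ (-s) := by
        apply mul_le_mul_of_nonneg_left h6 (by positivity)

lemma summable_S (m : ℕ) {x α : ℝ} (hx : 0 < x) (hα : 1 < α) :
    Summable (fun n : ℕ => (Real.log ((n : ℝ) + x)) ^ m * ((n : ℝ) + x) ^ (-α)) := by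
  refine Summable.of_abs ((summable_abs m hx hα).congr fun n => ?_)
  rw [abs_mul, abs_pow, abs_of_nonneg (Real.rpow_nonneg ?_ _)]
  have := Nat.cast_nonneg (α := ℝ) n; linarith

lemma hasDerivAt_S (m : ℕ) {x α : ℝ} (hx : 0 < x) (hα : 1 < α) :
    HasDerivAt (fun β => S m β x) (-(S (m + 1) α x)) α := by
  set a : ℝ := (1 + α) / 2 with hadef
  set b : ℝ := α + 1 with hbdef
  have ha1 : 1 < a := by rw [hadef]; linarith
  have haα : a < α := by rw [hadef]; linarith
  have hb1 : 1 < b := by rw [hbdef]; linarith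
  have hαb : α < b := by rw [hbdef]; linarith
  have key : HasDerivAt (fun β => ∑' n : ℕ, (Real.log ((n : ℝ) + x)) ^ m * ((n : ℝ) + x) ^ (-β))
      (∑' n : ℕ, -((Real.log ((n : ℝ) + x)) ^ (m + 1) * ((n : ℝ) + x) ^ (-α))) α := by
    apply hasDerivAt_tsum_of_isPreconnected
      (u := fun n : ℕ => |Real.log ((n : ℝ) + x)| ^ (m + 1) *
        (((n : ℝ) + x) ^ (-a) + ((n : ℝ) + x) ^ (-b)))
      (g' := fun (n : ℕ) (β : ℝ) => -((Real.log ((n : ℝ) + x)) ^ (m + 1) * ((n : ℝ) + x) ^ (-β)))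
      (t := Set.Ioo a b) (y₀ := α)
    · refine ((summable_abs (m + 1) hx ha1).add (summable_abs (m + 1) hx hb1)).congr fun n => ?_
      ring
    · exact isOpen_Ioo
    · exact isPreconnected_Ioo
    · intro n y _
      have ht0 : (0 : ℝ) < (n : ℝ) + x := by
        have := Nat.cast_nonneg (α := ℝ) n; linarith
      have h1 : HasDerivAt (fun β : ℝ => ((n : ℝ) + x) ^ β)
          (((n : ℝ) + x) ^ (-y) * Real.log ((n : ℝ) + x)) (-y) :=
        (Real.hasStrictDerivAt_const_rpow ht0 (-y)).hasDerivAt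
      have h2 : HasDerivAt (fun β : ℝ => ((n : ℝ) + x) ^ (-β))
          ((((n : ℝ) + x) ^ (-y) * Real.log ((n : ℝ) + x)) * (-1)) y :=
        h1.comp y (hasDerivAt_neg y)
      have h3 := h2.const_mul ((Real.log ((n : ℝ) + x)) ^ m)
      exact h3.congr_deriv (by ring)
    · intro n y hy
      have ht0 : (0 : ℝ) < (n : ℝ) + x := by
        have := Nat.cast_nonneg (α := ℝ) n; linarith
      have hnorm : ‖-((Real.log ((n : ℝ) + x)) ^ (m + 1) * ((n : ℝ) + x) ^ (-y))‖
          = |Real.log ((n : ℝ) + x)| ^ (m + 1) * ((n : ℝ) + x) ^ (-y) := by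
        rw [norm_neg, Real.norm_eq_abs, abs_mul, abs_pow,
          abs_of_nonneg (Real.rpow_nonneg ht0.le _)]
      rw [hnorm]
      have hbound : ((n : ℝ) + x) ^ (-y) ≤ ((n : ℝ) + x) ^ (-a) + ((n : ℝ) + x) ^ (-b) := by
        rcases le_total 1 ((n : ℝ) + x) with h1 | h1
        · have : ((n : ℝ) + x) ^ (-y) ≤ ((n : ℝ) + x) ^ (-a) :=
            Real.rpow_le_rpow_of_exponent_le h1 (by linarith [hy.1])
          have hnn : (0 : ℝ) ≤ ((n : ℝ) + x) ^ (-b) := Real.rpow_nonneg ht0.le _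
          linarith
        · have : ((n : ℝ) + x) ^ (-y) ≤ ((n : ℝ) + x) ^ (-b) :=
            Real.rpow_le_rpow_of_exponent_ge ht0 h1 (by linarith [hy.2])
          have hnn : (0 : ℝ) ≤ ((n : ℝ) + x) ^ (-a) := Real.rpow_nonneg ht0.le _
          linarith
      exact mul_le_mul_of_nonneg_left hbound (by positivity)
    · exact Set.mem_Ioo.mpr ⟨haα, hαb⟩
    · exact summable_S m hx hα
    · exact Set.mem_Ioo.mpr ⟨haα, hαb⟩
  rw [show (∑' n : ℕ, -((Real.log ((n : ℝ) + x)) ^ (m + 1) * ((n : ℝ) + x) ^ (-α)))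
      = -(S (m + 1) α x) by rw [S, tsum_neg]] at key
  exact key

/-- Variance (Cauchy–Schwarz) strict inequality for weighted series. -/
lemma variance {w L : ℕ → ℝ} (hw : ∀ n, 0 < w n)
    (h0 : Summable w) (h1 : Summable fun n => L n * w n)
    (h2 : Summable fun n => L n ^ 2 * w n)
    {i j : ℕ} (hij : L i ≠ L j) :
    (∑' n, L n * w n) ^ 2 < (∑' n, w n) * (∑' n, L n ^ 2 * w n) := by
  set S0 := ∑' n, w n with hS0def
  set S1 := ∑' n, L n * w n with hS1def
  set S2 := ∑' n, L n ^ 2 * w n with hS2def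
  have hS0 : 0 < S0 := Summable.tsum_pos h0 (fun n => (hw n).le) 0 (hw 0)
  set μ : ℝ := S1 / S0 with hμdef
  have hq : ∀ n, w n * (L n - μ) ^ 2
      = (L n ^ 2 * w n - 2 * μ * (L n * w n)) + μ ^ 2 * w n := fun n => by ring
  have hsub : Summable (fun n => L n ^ 2 * w n - 2 * μ * (L n * w n)) :=
    h2.sub (h1.mul_left (2 * μ))
  have hsq : Summable (fun n => w n * (L n - μ) ^ 2) := by
    refine Summable.congr ?_ (fun n => (hq n).symm)
    exact hsub.add (h0.mul_left (μ ^ 2))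
  have htsum : ∑' n, w n * (L n - μ) ^ 2 = S2 - 2 * μ * S1 + μ ^ 2 * S0 := by
    calc ∑' n, w n * (L n - μ) ^ 2
        = ∑' n, ((L n ^ 2 * w n - 2 * μ * (L n * w n)) + μ ^ 2 * w n) := tsum_congr hq
      _ = (∑' n, (L n ^ 2 * w n - 2 * μ * (L n * w n))) + ∑' n, μ ^ 2 * w n :=
          Summable.tsum_add hsub (h0.mul_left _)
      _ = ((∑' n, L n ^ 2 * w n) - ∑' n, 2 * μ * (L n * w n)) + ∑' n, μ ^ 2 * w n := by
          rw [Summable.tsum_sub h2 (h1.mul_left _)]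
      _ = S2 - 2 * μ * S1 + μ ^ 2 * S0 := by rw [tsum_mul_left, tsum_mul_left]
  have hk : ∃ k, L k ≠ μ := by
    by_contra h
    push_neg at h
    exact hij ((h i).trans (h j).symm)
  obtain ⟨k, hk⟩ := hk
  have hpos : 0 < ∑' n, w n * (L n - μ) ^ 2 := by
    refine Summable.tsum_pos hsq (fun n => mul_nonneg (hw n).le (sq_nonneg _)) k ?_
    have hne : L k - μ ≠ 0 := sub_ne_zero.mpr hk
    exact mul_pos (hw k) (by positivity)
  rw [htsum] at hpos
  have he : S2 - 2 * μ * S1 + μ ^ 2 * S0 = S2 - S1 ^ 2 / S0 := by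
    rw [hμdef]; field_simp; ring
  rw [he, sub_pos, div_lt_iff₀ hS0] at hpos
  linarith [hpos]

/-- The interleaving sequence. -/
def bseq (τ : ℝ) (n : ℕ) : ℝ := ((n / 2 : ℕ) : ℝ) + (if Even n then τ else 1 - τ)

lemma bseq_even (τ : ℝ) (k : ℕ) : bseq τ (2 * k) = (k : ℝ) + τ := by
  simp [bseq, Nat.mul_div_cancel_left k (by norm_num : 0 < 2), even_two_mul]

lemma bseq_odd (τ : ℝ) (k : ℕ) : bseq τ (2 * k + 1) = (k : ℝ) + (1 - τ) := by
  have h : (2 * k + 1) / 2 = k := by omega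
  have h2 : ¬ Even (2 * k + 1) := by
    simp [Nat.even_add_one, even_two_mul]
  simp [bseq, h, h2]

lemma bseq_pos {τ : ℝ} (hτ : τ ∈ Set.Ioo (0 : ℝ) 1) (n : ℕ) : 0 < bseq τ n := by
  have hc : (0 : ℝ) < if Even n then τ else 1 - τ := by
    split_ifs
    · exact hτ.1
    · linarith [hτ.2]
  have := Nat.cast_nonneg (α := ℝ) (n / 2)
  unfold bseq; linarith

lemma summable_bseq (m : ℕ) {τ α : ℝ} (hτ : τ ∈ Set.Ioo (0 : ℝ) 1) (hα : 1 < α) :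
    Summable (fun n : ℕ => (Real.log (bseq τ n)) ^ m * (bseq τ n) ^ (-α)) := by
  have hσ : 0 < 1 - τ := by linarith [hτ.2]
  have he : Summable (fun k : ℕ => (Real.log (bseq τ (2 * k))) ^ m * (bseq τ (2 * k)) ^ (-α)) := by
    refine (summable_S m hτ.1 hα).congr fun k => ?_
    rw [bseq_even]
  have ho : Summable (fun k : ℕ =>
      (Real.log (bseq τ (2 * k + 1))) ^ m * (bseq τ (2 * k + 1)) ^ (-α)) := by
    refine (summable_S m hσ hα).congr fun k => ?_
    rw [bseq_odd]
  exact Summable.even_add_odd (f := fun n => (Real.log (bseq τ n)) ^ m * (bseq τ n) ^ (-α)) he ho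

lemma tsum_bseq (m : ℕ) {τ α : ℝ} (hτ : τ ∈ Set.Ioo (0 : ℝ) 1) (hα : 1 < α) :
    ∑' n : ℕ, (Real.log (bseq τ n)) ^ m * (bseq τ n) ^ (-α) = S m α τ + S m α (1 - τ) := by
  have hσ : 0 < 1 - τ := by linarith [hτ.2]
  have he : Summable (fun k : ℕ => (Real.log (bseq τ (2 * k))) ^ m * (bseq τ (2 * k)) ^ (-α)) := by
    refine (summable_S m hτ.1 hα).congr fun k => ?_
    rw [bseq_even]
  have ho : Summable (fun k : ℕ =>
      (Real.log (bseq τ (2 * k + 1))) ^ m * (bseq τ (2 * k + 1)) ^ (-α)) := by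
    refine (summable_S m hσ hα).congr fun k => ?_
    rw [bseq_odd]
  rw [← tsum_even_add_odd (f := fun n => (Real.log (bseq τ n)) ^ m * (bseq τ n) ^ (-α)) he ho,
    S, S]
  congr 1
  · exact tsum_congr fun k => by rw [bseq_even]
  · exact tsum_congr fun k => by rw [bseq_odd]

lemma S_pos {τ α : ℝ} (hτ : 0 < τ) (hα : 1 < α) : 0 < S 0 α τ := by
  refine Summable.tsum_pos (summable_S 0 hτ hα) (fun n => ?_) 0 ?_
  · have : (0 : ℝ) < (n : ℝ) + τ := by
      have := Nat.cast_nonneg (α := ℝ) n; linarith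
    rw [pow_zero, one_mul]
    exact (Real.rpow_pos_of_pos this _).le
  · rw [pow_zero, one_mul]
    refine Real.rpow_pos_of_pos ?_ _
    have : ((0 : ℕ) : ℝ) = 0 := by norm_num
    rw [this, zero_add]
    exact hτ

end SymHZ

open SymHZ Real

set_option maxHeartbeats 1000000 in
/-- for every `τ ∈ (0,1)`, the function
`f(α) = ζ(α,τ) + ζ(α,1−τ)` is strictly log-convex on `(1,∞)`: it is twice
differentiable there and satisfies `f(α) f''(α) > (f'(α))²` for all `α > 1`. -/
theorem symHurwitzZeta_strictly_log_convex (τ : ℝ) (hτ : τ ∈ Set.Ioo (0 : ℝ) 1) :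
    (∀ α ∈ Set.Ioi (1 : ℝ),
      DifferentiableAt ℝ (fun β => hurwitzZetaSum β τ + hurwitzZetaSum β (1 - τ)) α) ∧
    (∀ α ∈ Set.Ioi (1 : ℝ),
      DifferentiableAt ℝ
        (deriv fun β => hurwitzZetaSum β τ + hurwitzZetaSum β (1 - τ)) α) ∧
    (∀ α ∈ Set.Ioi (1 : ℝ),
      (hurwitzZetaSum α τ + hurwitzZetaSum α (1 - τ)) *
          deriv (deriv fun β => hurwitzZetaSum β τ + hurwitzZetaSum β (1 - τ)) α >
        (deriv (fun β => hurwitzZetaSum β τ + hurwitzZetaSum β (1 - τ)) α) ^ 2) ∧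
    StrictConvexOn ℝ (Set.Ioi (1 : ℝ))
      (fun α => Real.log (hurwitzZetaSum α τ + hurwitzZetaSum α (1 - τ))) := by
  obtain ⟨hτ0, hτ1⟩ := hτ
  have hσ : 0 < 1 - τ := by linarith
  -- first derivative
  have hd1 : ∀ α ∈ Set.Ioi (1 : ℝ),
      HasDerivAt (fun β => hurwitzZetaSum β τ + hurwitzZetaSum β (1 - τ))
        (-(S 1 α τ + S 1 α (1 - τ))) α := by
    intro α hα
    have h := (hasDerivAt_S 0 hτ0 hα).add (hasDerivAt_S 0 hσ hα)
    simp only [S_zero] at h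
    exact h.congr_deriv (by ring)
  -- second derivative (of the explicit first-derivative function)
  have hd2 : ∀ α ∈ Set.Ioi (1 : ℝ),
      HasDerivAt (fun β => -(S 1 β τ + S 1 β (1 - τ))) (S 2 α τ + S 2 α (1 - τ)) α := by
    intro α hα
    have h := ((hasDerivAt_S 1 hτ0 hα).add (hasDerivAt_S 1 hσ hα)).neg
    exact h.congr_deriv (by ring)
  have hEq : ∀ α ∈ Set.Ioi (1 : ℝ),
      (deriv fun β => hurwitzZetaSum β τ + hurwitzZetaSum β (1 - τ))
        =ᶠ[nhds α] fun β => -(S 1 β τ + S 1 β (1 - τ)) := by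
    intro α hα
    filter_upwards [isOpen_Ioi.mem_nhds hα] with β hβ
    exact (hd1 β hβ).deriv
  have hdd : ∀ α ∈ Set.Ioi (1 : ℝ),
      HasDerivAt (deriv fun β => hurwitzZetaSum β τ + hurwitzZetaSum β (1 - τ))
        (S 2 α τ + S 2 α (1 - τ)) α := by
    intro α hα
    exact (hd2 α hα).congr_of_eventuallyEq (hEq α hα)
  -- key strict inequality between S-values
  have hkey : ∀ α ∈ Set.Ioi (1 : ℝ),
      (S 1 α τ + S 1 α (1 - τ)) ^ 2
        < (S 0 α τ + S 0 α (1 - τ)) * (S 2 α τ + S 2 α (1 - τ)) := by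
    intro α hα
    have hw : ∀ n, 0 < bseq τ n ^ (-α) :=
      fun n => Real.rpow_pos_of_pos (bseq_pos ⟨hτ0, hτ1⟩ n) _
    have h0 : Summable (fun n => bseq τ n ^ (-α)) := by
      refine (summable_bseq 0 ⟨hτ0, hτ1⟩ hα).congr fun n => ?_
      rw [pow_zero, one_mul]
    have h1 : Summable (fun n => Real.log (bseq τ n) * bseq τ n ^ (-α)) := by
      refine (summable_bseq 1 ⟨hτ0, hτ1⟩ hα).congr fun n => ?_
      rw [pow_one]
    have h2 : Summable (fun n => (Real.log (bseq τ n)) ^ 2 * bseq τ n ^ (-α)) :=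
      summable_bseq 2 ⟨hτ0, hτ1⟩ hα
    have hij : Real.log (bseq τ 0) ≠ Real.log (bseq τ 2) := by
      have e0 : bseq τ 0 = τ := by
        have := bseq_even τ 0; simpa using this
      have e2 : bseq τ 2 = 1 + τ := by
        have := bseq_even τ 1; norm_num at this; rw [show (2 : ℕ) = 2 * 1 by norm_num, bseq_even]
        push_cast; ring
      rw [e0, e2]
      exact ne_of_lt (Real.log_lt_log hτ0 (by linarith))
    have hv := variance hw h0 h1 h2 hij
    have t0 : ∑' n, bseq τ n ^ (-α) = S 0 α τ + S 0 α (1 - τ) := by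
      rw [← tsum_bseq 0 ⟨hτ0, hτ1⟩ hα]
      exact tsum_congr fun n => by rw [pow_zero, one_mul]
    have t1 : ∑' n, Real.log (bseq τ n) * bseq τ n ^ (-α) = S 1 α τ + S 1 α (1 - τ) := by
      rw [← tsum_bseq 1 ⟨hτ0, hτ1⟩ hα]
      exact tsum_congr fun n => by rw [pow_one]
    have t2 : ∑' n, (Real.log (bseq τ n)) ^ 2 * bseq τ n ^ (-α)
        = S 2 α τ + S 2 α (1 - τ) := tsum_bseq 2 ⟨hτ0, hτ1⟩ hα
    rwa [t0, t1, t2] at hv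
  have hpos : ∀ α ∈ Set.Ioi (1 : ℝ), 0 < S 0 α τ + S 0 α (1 - τ) :=
    fun α hα => add_pos (S_pos hτ0 hα) (S_pos hσ hα)
  have hFpos : ∀ α ∈ Set.Ioi (1 : ℝ), 0 < hurwitzZetaSum α τ + hurwitzZetaSum α (1 - τ) := by
    intro α hα
    have := hpos α hα
    rwa [S_zero, S_zero] at this
  refine ⟨fun α hα => (hd1 α hα).differentiableAt,
    fun α hα => (hdd α hα).differentiableAt, fun α hα => ?_, ?_⟩
  · rw [(hdd α hα).deriv, (hd1 α hα).deriv]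
    have h := hkey α hα
    simp only [S_zero] at h
    calc (-(S 1 α τ + S 1 α (1 - τ))) ^ 2 = (S 1 α τ + S 1 α (1 - τ)) ^ 2 := by ring
      _ < (hurwitzZetaSum α τ + hurwitzZetaSum α (1 - τ)) * (S 2 α τ + S 2 α (1 - τ)) := h
  · apply strictConvexOn_of_deriv2_pos (convex_Ioi 1)
    · intro α hα
      exact (((hd1 α hα).differentiableAt.continuousAt.log
        (hFpos α hα).ne').continuousWithinAt)
    · rw [interior_Ioi]
      intro α hα
      -- the derivative of log ∘ F on Ioi 1
      have hg : ∀ β ∈ Set.Ioi (1 : ℝ),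
          HasDerivAt (fun γ => Real.log (hurwitzZetaSum γ τ + hurwitzZetaSum γ (1 - τ)))
            ((hurwitzZetaSum β τ + hurwitzZetaSum β (1 - τ))⁻¹ *
              (-(S 1 β τ + S 1 β (1 - τ)))) β := by
        intro β hβ
        exact (Real.hasDerivAt_log (hFpos β hβ).ne').comp β (hd1 β hβ)
      have hEq2 : (deriv fun γ => Real.log (hurwitzZetaSum γ τ + hurwitzZetaSum γ (1 - τ)))
          =ᶠ[nhds α] fun β => (S 0 β τ + S 0 β (1 - τ))⁻¹ * (-(S 1 β τ + S 1 β (1 - τ))) := by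
        filter_upwards [isOpen_Ioi.mem_nhds hα] with β hβ
        rw [(hg β hβ).deriv, S_zero, S_zero]
      -- derivative of the explicit function
      have h0' : HasDerivAt (fun β => S 0 β τ + S 0 β (1 - τ)) (-(S 1 α τ + S 1 α (1 - τ))) α := by
        have h := (hasDerivAt_S 0 hτ0 hα).add (hasDerivAt_S 0 hσ hα)
        exact h.congr_deriv (by ring)
      have hS0inv : HasDerivAt (fun β => (S 0 β τ + S 0 β (1 - τ))⁻¹)
          (-(-(S 1 α τ + S 1 α (1 - τ))) / (S 0 α τ + S 0 α (1 - τ)) ^ 2) α :=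
        h0'.inv (hpos α hα).ne'
      have hφ : HasDerivAt
          (fun β => (S 0 β τ + S 0 β (1 - τ))⁻¹ * (-(S 1 β τ + S 1 β (1 - τ))))
          (-(-(S 1 α τ + S 1 α (1 - τ))) / (S 0 α τ + S 0 α (1 - τ)) ^ 2 *
              (-(S 1 α τ + S 1 α (1 - τ))) +
            (S 0 α τ + S 0 α (1 - τ))⁻¹ * (S 2 α τ + S 2 α (1 - τ))) α :=
        hS0inv.mul (hd2 α hα)
      have hd2g : deriv^[2]
          (fun γ => Real.log (hurwitzZetaSum γ τ + hurwitzZetaSum γ (1 - τ))) α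
          = -(-(S 1 α τ + S 1 α (1 - τ))) / (S 0 α τ + S 0 α (1 - τ)) ^ 2 *
              (-(S 1 α τ + S 1 α (1 - τ))) +
            (S 0 α τ + S 0 α (1 - τ))⁻¹ * (S 2 α τ + S 2 α (1 - τ)) := by
        show deriv (deriv _) α = _
        rw [hEq2.deriv_eq, hφ.deriv]
      rw [hd2g]
      set A := S 0 α τ + S 0 α (1 - τ) with hA
      set B := S 1 α τ + S 1 α (1 - τ) with hB
      set C := S 2 α τ + S 2 α (1 - τ) with hC
      have hApos : 0 < A := hpos α hα
      have hBC : B ^ 2 < A * C := hkey α hα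
      have he : -(-B) / A ^ 2 * (-B) + A⁻¹ * C = (A * C - B ^ 2) / A ^ 2 := by
        field_simp
        ring
      rw [he]
      apply div_pos (by linarith) (by positivity)

end
end

section
/- Let a ∈ (−1,2) with a ∉ {0,1}, and for x > 0 define F_a(x) = ∫_0^1 λ^a/(λ + x) dλ. Then as x → 0⁺, F_a(x) = −(π/ sin(π a)) x^a + 1/a + x/(1−a) + O(x²). -/
open Real Filter Asymptotics MeasureTheory

section Aux

lemma realBeta_aux19 {b : ℝ} (hb0 : 0 < b) (hb1 : b < 1) :
    ∫ x in Set.Ioo (0:ℝ) 1, x ^ (b-1) * (1-x) ^ (-b) = π / Real.sin (π * b) := by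
  have hc : Complex.betaIntegral b (1-b) = (π : ℂ) / Complex.sin (π * b) := by
    have h1 := Complex.Gamma_mul_Gamma_eq_betaIntegral (s := b) (t := 1-b)
      (by simpa using hb0) (by simp [Complex.sub_re]; linarith)
    have h2 := Complex.Gamma_mul_Gamma_one_sub (b : ℂ)
    rw [show (b:ℂ) + (1 - b) = 1 by ring, Complex.Gamma_one, one_mul] at h1
    rw [← h1]
    convert h2 using 3
  have key : Complex.betaIntegral b (1-b)
      = ((∫ x in (0:ℝ)..1, x ^ (b-1) * (1-x) ^ (-b) : ℝ) : ℂ) := by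
    rw [Complex.betaIntegral, ← intervalIntegral.integral_ofReal]
    refine intervalIntegral.integral_congr fun x hx => ?_
    rw [Set.uIcc_of_le (by norm_num)] at hx
    have e1 : ((x : ℂ)) ^ ((b:ℂ) - 1) = ((x ^ (b-1) : ℝ) : ℂ) := by
      rw [Complex.ofReal_cpow hx.1]; norm_cast
    have e2 : ((1:ℂ) - (x:ℂ)) ^ ((1:ℂ) - (b:ℂ) - 1) = (((1-x) ^ (-b) : ℝ) : ℂ) := by
      rw [Complex.ofReal_cpow (by linarith [hx.2])]
      push_cast
      norm_num
    calc (x:ℂ) ^ ((b:ℂ)-1) * ((1:ℂ)-(x:ℂ)) ^ ((1:ℂ)-(b:ℂ)-1)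
        = ((x ^ (b-1) : ℝ) : ℂ) * (((1-x) ^ (-b) : ℝ) : ℂ) := by
          rw [e1, e2]
      _ = _ := by push_cast; ring
  have : ((∫ x in (0:ℝ)..1, x ^ (b-1) * (1-x) ^ (-b) : ℝ) : ℂ) = ((π / Real.sin (π * b) : ℝ) : ℂ) := by
    rw [← key, hc]; push_cast [Complex.ofReal_sin]; norm_num
  have h3 := Complex.ofReal_injective this
  rw [intervalIntegral.integral_of_le (by norm_num : (0:ℝ) ≤ 1),
    MeasureTheory.integral_Ioc_eq_integral_Ioo] at h3
  exact h3

lemma halfline_aux19 {b : ℝ} (hb0 : 0 < b) (hb1 : b < 1) :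
    ∫ t in Set.Ioi (0:ℝ), t ^ (b-1) / (1+t) = π / Real.sin (π * b) := by
  have himg : (fun x => x / (1-x)) '' Set.Ioo (0:ℝ) 1 = Set.Ioi 0 := by
    ext t
    simp only [Set.mem_image, Set.mem_Ioo, Set.mem_Ioi]
    constructor
    · rintro ⟨x, ⟨hx0, hx1⟩, rfl⟩
      exact div_pos hx0 (by linarith)
    · intro ht
      have h0 : (1:ℝ) + t ≠ 0 := by linarith
      refine ⟨t / (1+t), ⟨div_pos ht (by linarith), ?_⟩, ?_⟩
      · rw [div_lt_one (by linarith)]; linarith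
      · have e : 1 - t/(1+t) = 1/(1+t) := by field_simp; ring
        rw [e]; field_simp
  have hderiv : ∀ x ∈ Set.Ioo (0:ℝ) 1,
      HasDerivWithinAt (fun x => x / (1-x)) (((1-x)^2)⁻¹) (Set.Ioo 0 1) x := by
    intro x hx
    have h1 : (1:ℝ) - x ≠ 0 := by have := hx.2; intro h'; linarith
    have h := (hasDerivAt_id x).div ((hasDerivAt_const x 1).sub (hasDerivAt_id x)) h1
    simp only [id] at h
    have he : (1 * (1 - x) - x * (0 - 1)) / (1 - x) ^ 2 = ((1-x)^2)⁻¹ := by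
      field_simp; ring
    rw [← he]
    exact h.hasDerivWithinAt
  have hinj : Set.InjOn (fun x => x / (1-x)) (Set.Ioo (0:ℝ) 1) := by
    intro x hx y hy h
    simp only at h
    have hx1 : (1:ℝ) - x ≠ 0 := by have := hx.2; intro h'; linarith
    have hy1 : (1:ℝ) - y ≠ 0 := by have := hy.2; intro h'; linarith
    field_simp at h
    linarith
  have key := MeasureTheory.integral_image_eq_integral_abs_deriv_smul measurableSet_Ioo
    hderiv hinj (fun t => t ^ (b-1) / (1+t))
  rw [himg] at key
  rw [key, ← realBeta_aux19 hb0 hb1]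
  refine setIntegral_congr_fun measurableSet_Ioo fun x hx => ?_
  obtain ⟨hx0, hx1⟩ := hx
  have h1 : (0:ℝ) < 1 - x := by linarith
  have e1 : (1:ℝ) + x / (1-x) = (1-x)⁻¹ := by field_simp; ring
  have e2 : (x / (1-x)) ^ (b-1) = x ^ (b-1) * (1-x) ^ (1-b) := by
    rw [div_eq_mul_inv, Real.mul_rpow hx0.le (inv_nonneg.2 h1.le),
      ← Real.rpow_neg_one (1-x), ← Real.rpow_mul h1.le]
    congr 1
    ring
  have e3 : (((1-x)^2)⁻¹ : ℝ) = (1-x) ^ (-2:ℝ) := by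
    rw [Real.rpow_neg h1.le, ← Real.rpow_natCast (1-x) 2]
    norm_num
  have e5 : (1-x) ^ (-2:ℝ) * ((1-x) ^ (1-b) / (1-x)⁻¹) = (1-x) ^ (-b) := by
    rw [div_eq_mul_inv, inv_inv]
    nth_rewrite 3 [← Real.rpow_one (1-x)]
    rw [← Real.rpow_add h1, ← Real.rpow_add h1]
    congr 1
    ring
  rw [smul_eq_mul, abs_of_pos (by positivity), e1, e2, e3]
  calc (1-x) ^ (-2:ℝ) * (x ^ (b-1) * (1-x) ^ (1-b) / (1-x)⁻¹)
      = x ^ (b-1) * ((1-x) ^ (-2:ℝ) * ((1-x) ^ (1-b) / (1-x)⁻¹)) := by ring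
    _ = _ := by rw [e5]

lemma int01_aux19 {a x : ℝ} (ha : -1 < a) (hx : 0 < x) :
    IntegrableOn (fun t => t ^ a / (t + x)) (Set.Ioc (0:ℝ) 1) := by
  have h0 : IntegrableOn (fun t : ℝ => t ^ a) (Set.Ioc (0:ℝ) 1) := by
    rw [← intervalIntegrable_iff_integrableOn_Ioc_of_le (by norm_num : (0:ℝ) ≤ 1)]
    exact intervalIntegral.intervalIntegrable_rpow' ha
  refine (h0.div_const x).mono' ?_ ?_
  · apply ContinuousOn.aestronglyMeasurable ?_ measurableSet_Ioc
    intro t ht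
    exact ((Real.continuousAt_rpow_const t a (Or.inl (ne_of_gt ht.1))).continuousWithinAt).div
      (continuousWithinAt_id.add continuousWithinAt_const)
      (by have h := ht.1; intro hc; nlinarith)
  · filter_upwards [ae_restrict_mem measurableSet_Ioc] with t ht
    have h1 : (0:ℝ) < t := ht.1
    rw [Real.norm_eq_abs, abs_of_pos (div_pos (Real.rpow_pos_of_pos h1 a) (by linarith))]
    exact div_le_div_of_nonneg_left (Real.rpow_pos_of_pos h1 a).le hx (by linarith)

lemma intIoi_aux19 {a x : ℝ} (ha : a < 0) (hx : 0 ≤ x) :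
    IntegrableOn (fun t => t ^ a / (t + x)) (Set.Ioi (1:ℝ)) := by
  have hbound : IntegrableOn (fun t : ℝ => t ^ (a-1)) (Set.Ioi (1:ℝ)) :=
    integrableOn_Ioi_rpow_of_lt (by linarith) one_pos
  refine hbound.mono' ?_ ?_
  · apply ContinuousOn.aestronglyMeasurable ?_ measurableSet_Ioi
    intro t ht
    have h1 : (0:ℝ) < t := lt_trans one_pos ht
    exact ((Real.continuousAt_rpow_const t a (Or.inl (ne_of_gt h1))).continuousWithinAt).div
      (continuousWithinAt_id.add continuousWithinAt_const)
      (by intro hc; nlinarith)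
  · filter_upwards [ae_restrict_mem measurableSet_Ioi] with t ht
    have h1 : (1:ℝ) < t := ht
    have h0 : (0:ℝ) < t := lt_trans one_pos h1
    rw [Real.norm_eq_abs, abs_of_pos (div_pos (Real.rpow_pos_of_pos h0 a) (by linarith))]
    calc t ^ a / (t + x) ≤ t ^ a / t := by
          apply div_le_div_of_nonneg_left (Real.rpow_pos_of_pos h0 a).le h0; linarith
      _ = t ^ (a - 1) := by
          rw [Real.rpow_sub h0, Real.rpow_one]

lemma scaled_aux19 {a x : ℝ} (ha₁ : -1 < a) (ha0 : a < 0) (hx : 0 < x) :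
    ∫ t in Set.Ioi (0:ℝ), t ^ a / (t + x) = -(π / Real.sin (π * a)) * x ^ a := by
  have key := MeasureTheory.integral_comp_mul_left_Ioi (fun t => t ^ a / (t + x)) 0 hx
  rw [mul_zero] at key
  have congr1 : ∫ (u : ℝ) in Set.Ioi 0, (x * u) ^ a / (x * u + x)
      = ∫ (u : ℝ) in Set.Ioi 0, x ^ (a-1) * (u ^ a / (1 + u)) := by
    refine setIntegral_congr_fun measurableSet_Ioi fun u hu => ?_
    have hu0 : (0:ℝ) < u := hu
    rw [Real.mul_rpow hx.le hu0.le]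
    rw [show x * u + x = x * (1 + u) by ring, Real.rpow_sub hx, Real.rpow_one]
    field_simp
  rw [congr1, MeasureTheory.integral_const_mul] at key
  have hb := halfline_aux19 (b := a + 1) (by linarith) (by linarith)
  rw [show a + 1 - 1 = a by ring] at hb
  rw [hb] at key
  have hsin : Real.sin (π * (a+1)) = -Real.sin (π * a) := by
    rw [show π * (a+1) = π * a + π by ring, Real.sin_add_pi]
  rw [hsin, smul_eq_mul] at key
  have : ∫ t in Set.Ioi (0:ℝ), t ^ a / (t + x) = x * (x ^ (a-1) * (π / -Real.sin (π * a))) := by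
    rw [key, ← mul_assoc, mul_inv_cancel₀ (ne_of_gt hx), one_mul]
  rw [this, ← mul_assoc, show x * x ^ (a-1) = x ^ a by
    nth_rewrite 1 [← Real.rpow_one x]; rw [← Real.rpow_add hx]; norm_num]
  rw [div_neg]
  ring

lemma baseCase_aux19 {a : ℝ} (ha₁ : -1 < a) (ha0 : a < 0) {x : ℝ} (hx : 0 < x) :
    |(∫ lam in Set.Ioc (0:ℝ) 1, lam ^ a / (lam + x)) -
      (-(π / Real.sin (π * a)) * x ^ a + 1 / a + x / (1 - a))| ≤ (1/(2-a)) * x ^ 2 := by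
  have hrpow1 : IntegrableOn (fun t : ℝ => t ^ (a-1)) (Set.Ioi (1:ℝ)) :=
    integrableOn_Ioi_rpow_of_lt (by linarith) one_pos
  have hrpow2 : IntegrableOn (fun t : ℝ => t ^ (a-2)) (Set.Ioi (1:ℝ)) :=
    integrableOn_Ioi_rpow_of_lt (by linarith) one_pos
  have hrpow3 : IntegrableOn (fun t : ℝ => t ^ (a-3)) (Set.Ioi (1:ℝ)) :=
    integrableOn_Ioi_rpow_of_lt (by linarith) one_pos
  have hE : IntegrableOn (fun t => t ^ (a-2) / (t + x)) (Set.Ioi (1:ℝ)) :=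
    intIoi_aux19 (by linarith) hx.le
  set E := ∫ t in Set.Ioi (1:ℝ), t ^ (a-2) / (t + x) with hEdef
  have hsplit : (∫ t in Set.Ioi (0:ℝ), t ^ a / (t + x))
      = (∫ t in Set.Ioc (0:ℝ) 1, t ^ a / (t + x)) + ∫ t in Set.Ioi (1:ℝ), t ^ a / (t + x) := by
    rw [← MeasureTheory.setIntegral_union (Set.Ioc_disjoint_Ioi le_rfl) measurableSet_Ioi
      (int01_aux19 ha₁ hx) (intIoi_aux19 ha0 hx.le), Set.Ioc_union_Ioi_eq_Ioi zero_le_one]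
  have htail : (∫ t in Set.Ioi (1:ℝ), t ^ a / (t + x))
      = -(1/a) + x / (a-1) + x ^ 2 * E := by
    have hcongr : (∫ t in Set.Ioi (1:ℝ), t ^ a / (t + x))
        = ∫ t in Set.Ioi (1:ℝ), (t ^ (a-1) - x * t ^ (a-2) + x^2 * (t ^ (a-2) / (t + x))) := by
      refine setIntegral_congr_fun measurableSet_Ioi fun t ht => ?_
      have h1 : (1:ℝ) < t := ht
      have h0 : (0:ℝ) < t := lt_trans one_pos h1
      have htx : t + x ≠ 0 := by positivity
      have e1 : t ^ (a-1) = t ^ a / t := by rw [Real.rpow_sub h0, Real.rpow_one]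
      have e2 : t ^ (a-2) = t ^ a / t^2 := by
        rw [show a - 2 = a - (2:ℕ) by norm_num, Real.rpow_sub h0, Real.rpow_natCast]
      rw [e1, e2]
      field_simp
      ring
    have h1 := MeasureTheory.integral_add (μ := volume.restrict (Set.Ioi 1))
      (hrpow1.sub (hrpow2.const_mul x)) (hE.const_mul (x^2))
    have h2 := MeasureTheory.integral_sub (μ := volume.restrict (Set.Ioi 1))
      hrpow1 (hrpow2.const_mul x)
    simp only [Pi.add_apply, Pi.sub_apply] at h1 h2
    rw [hcongr]
    rw [h1, h2,
      MeasureTheory.integral_const_mul, MeasureTheory.integral_const_mul,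
      integral_Ioi_rpow_of_lt (by linarith : a - 1 < -1) one_pos,
      integral_Ioi_rpow_of_lt (by linarith : a - 2 < -1) one_pos]
    rw [Real.one_rpow, Real.one_rpow]
    have : a - 1 + 1 = a := by ring
    rw [this, show a - 2 + 1 = a - 1 by ring]
    field_simp
    ring
  have hF : (∫ t in Set.Ioc (0:ℝ) 1, t ^ a / (t + x))
      = -(π / Real.sin (π * a)) * x ^ a + 1/a + x/(1-a) - x^2 * E := by
    have := scaled_aux19 ha₁ ha0 hx
    rw [hsplit, htail] at this
    have e : x / (1 - a) = -(x / (a - 1)) := by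
      have h1a : (1:ℝ) - a ≠ 0 := by linarith
      have h2a : a - 1 ≠ 0 := by intro h; linarith
      field_simp
      ring
    linarith [this]
  rw [hF]
  have hEnn : 0 ≤ E := by
    apply setIntegral_nonneg measurableSet_Ioi
    intro t ht
    have h0 : (0:ℝ) < t := lt_trans one_pos ht
    positivity
  have hEub : E ≤ 1/(2-a) := by
    have hmono : E ≤ ∫ t in Set.Ioi (1:ℝ), t ^ (a-3) := by
      apply setIntegral_mono_on hE hrpow3 measurableSet_Ioi
      intro t ht
      have h1 : (1:ℝ) < t := ht
      have h0 : (0:ℝ) < t := lt_trans one_pos h1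
      calc t ^ (a-2) / (t + x) ≤ t ^ (a-2) / t := by
            apply div_le_div_of_nonneg_left (Real.rpow_pos_of_pos h0 _).le h0; linarith
        _ = t ^ (a-3) := by
            conv_rhs => rw [show a - 3 = a - 2 - 1 by ring, Real.rpow_sub h0, Real.rpow_one]
    rw [integral_Ioi_rpow_of_lt (by linarith : a - 3 < -1) one_pos, Real.one_rpow] at hmono
    calc E ≤ -1 / (a - 3 + 1) := hmono
      _ = 1 / (2 - a) := by rw [div_eq_div_iff (by linarith) (by linarith)]; ring
  have : |(-(π / Real.sin (π * a)) * x ^ a + 1/a + x/(1-a) - x^2*E) -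
      (-(π / Real.sin (π * a)) * x ^ a + 1 / a + x / (1 - a))| = x^2 * E := by
    rw [show (-(π / Real.sin (π * a)) * x ^ a + 1/a + x/(1-a) - x^2*E) -
      (-(π / Real.sin (π * a)) * x ^ a + 1 / a + x / (1 - a)) = -(x^2*E) by ring, abs_neg,
      abs_of_nonneg (by positivity)]
  rw [this]
  calc x^2 * E ≤ x^2 * (1/(2-a)) := by nlinarith [sq_nonneg x]
    _ = (1/(2-a)) * x^2 := by ring

lemma recur_aux19 {a x : ℝ} (ha : 0 < a) (hx : 0 < x) :
    ∫ lam in Set.Ioc (0:ℝ) 1, lam ^ a / (lam + x)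
      = 1/a - x * ∫ lam in Set.Ioc (0:ℝ) 1, lam ^ (a-1) / (lam + x) := by
  have hint1 : IntegrableOn (fun t : ℝ => t ^ (a-1)) (Set.Ioc (0:ℝ) 1) := by
    rw [← intervalIntegrable_iff_integrableOn_Ioc_of_le (by norm_num : (0:ℝ) ≤ 1)]
    exact intervalIntegral.intervalIntegrable_rpow' (by linarith)
  have hint2 : IntegrableOn (fun t : ℝ => x * (t ^ (a-1) / (t + x))) (Set.Ioc (0:ℝ) 1) :=
    (int01_aux19 (by linarith) hx).const_mul x
  have hcongr : ∫ lam in Set.Ioc (0:ℝ) 1, lam ^ a / (lam + x)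
      = ∫ lam in Set.Ioc (0:ℝ) 1, (lam ^ (a-1) - x * (lam ^ (a-1) / (lam + x))) := by
    refine setIntegral_congr_fun measurableSet_Ioc fun t ht => ?_
    have h0 : (0:ℝ) < t := ht.1
    have htx : t + x ≠ 0 := by positivity
    have e1 : t ^ a = t ^ (a-1) * t := by
      have h := Real.rpow_add h0 (a-1) 1
      rw [Real.rpow_one, show a-1+1 = a by ring] at h
      exact h
    rw [e1]
    field_simp
    ring
  have h2 := MeasureTheory.integral_sub (μ := volume.restrict (Set.Ioc 0 1)) hint1 hint2
  rw [hcongr, h2, MeasureTheory.integral_const_mul]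
  have : ∫ t in Set.Ioc (0:ℝ) 1, t ^ (a-1) = 1/a := by
    rw [← intervalIntegral.integral_of_le (by norm_num : (0:ℝ) ≤ 1),
      integral_rpow (Or.inl (by linarith))]
    rw [show a - 1 + 1 = a by ring, Real.one_rpow, Real.zero_rpow (ne_of_gt ha)]
    norm_num
  rw [this]

end Aux

/-- asymptotic expansion of `F_a(x) = ∫_0^1 λ^a/(λ+x) dλ` as `x → 0⁺`:
`F_a(x) = −(π/sin(πa)) x^a + 1/a + x/(1−a) + O(x²)` for `a ∈ (−1,2)`, `a ∉ {0,1}`. -/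
theorem powerlaw_integral_asymptotics (a : ℝ)
    (ha₁ : -1 < a) (ha₂ : a < 2) (ha0 : a ≠ 0) (ha1 : a ≠ 1) :
    (fun x : ℝ =>
        (∫ lam in Set.Ioc (0 : ℝ) 1, lam ^ a / (lam + x)) -
          (-(π / Real.sin (π * a)) * x ^ a + 1 / a + x / (1 - a)))
      =O[nhdsWithin 0 (Set.Ioi 0)] fun x : ℝ => x ^ 2 := by
  rw [Asymptotics.isBigO_iff]
  refine ⟨1/(2-a) + 1/(3-a) + 1/(4-a) + 1, ?_⟩
  have hmem : Set.Ioo (0:ℝ) 1 ∈ nhdsWithin 0 (Set.Ioi 0) :=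
    Ioo_mem_nhdsGT_of_mem ⟨le_refl 0, one_pos⟩
  filter_upwards [hmem] with x hx
  obtain ⟨hx0, hx1⟩ := hx
  rw [Real.norm_eq_abs, Real.norm_eq_abs, abs_of_nonneg (sq_nonneg x)]
  have h2a : (0:ℝ) < 2 - a := by linarith
  have h3a : (0:ℝ) < 3 - a := by linarith
  have h4a : (0:ℝ) < 4 - a := by linarith
  rcases lt_trichotomy a 0 with hneg | hzero | hpos
  · have h := baseCase_aux19 ha₁ hneg hx0
    have : (1/(2-a)) * x^2 ≤ (1/(2-a) + 1/(3-a) + 1/(4-a) + 1) * x^2 := by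
      have : (0:ℝ) ≤ (1/(3-a) + 1/(4-a) + 1) * x^2 := by positivity
      nlinarith
    linarith
  · exact absurd hzero ha0
  · rcases lt_trichotomy a 1 with hlt | hone | hgt
    · -- 0 < a < 1
      have hr := recur_aux19 hpos hx0
      have hE := baseCase_aux19 (a := a-1) (by linarith) (by linarith) hx0
      set F1 := ∫ lam in Set.Ioc (0:ℝ) 1, lam ^ (a-1) / (lam + x) with hF1
      set E : ℝ := F1 - (-(π / Real.sin (π * (a-1))) * x ^ (a-1) + 1/(a-1) + x/(1-(a-1)))
        with hEdef
      have hEbd : |E| ≤ (1/(3-a)) * x^2 := by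
        rw [show (3:ℝ) - a = 2 - (a-1) by ring]
        exact hE
      have hsin : Real.sin (π * (a-1)) = -Real.sin (π * a) := by
        rw [show π * (a-1) = π * a - π by ring, Real.sin_sub_pi]
      have hxp : x * x ^ (a-1) = x ^ a := by
        have h := Real.rpow_add hx0 1 (a-1)
        rw [Real.rpow_one, show 1+(a-1) = a by ring] at h
        exact h.symm
      have key : (∫ lam in Set.Ioc (0:ℝ) 1, lam ^ a / (lam + x)) -
          (-(π / Real.sin (π * a)) * x ^ a + 1 / a + x / (1 - a))
          = -(x^2/(2-a)) - x * E := by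
        rw [hr, hEdef, hsin]
        rw [show (1:ℝ) - a = -(a-1) by ring, div_neg, show (1:ℝ)-(a-1) = 2-a by ring,
          div_neg, neg_neg]
        rw [← hxp]
        ring
      rw [key]
      have habs : |-(x^2/(2-a)) - x * E| ≤ x^2/(2-a) + x * |E| := by
        calc |-(x^2/(2-a)) - x * E| ≤ |-(x^2/(2-a))| + |x * E| := abs_sub _ _
          _ = x^2/(2-a) + x * |E| := by
              rw [abs_neg, abs_of_nonneg (by positivity), abs_mul, abs_of_pos hx0]
      have hxE : x * |E| ≤ (1/(3-a)) * x^2 := by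
        calc x * |E| ≤ 1 * |E| := by
              apply mul_le_mul_of_nonneg_right hx1.le (abs_nonneg E)
          _ = |E| := one_mul _
          _ ≤ (1/(3-a)) * x^2 := hEbd
      have hthis : x^2/(2-a) = (1/(2-a)) * x^2 := by ring
      have p1 : (0:ℝ) ≤ (1/(4-a)) * x^2 := by positivity
      have p2 : (0:ℝ) ≤ x^2 := sq_nonneg x
      have expand : (1/(2-a) + 1/(3-a) + 1/(4-a) + 1) * x^2
          = (1/(2-a))*x^2 + (1/(3-a))*x^2 + (1/(4-a))*x^2 + x^2 := by ring
      linarith [habs, hxE]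
    · exact absurd hone ha1
    · -- 1 < a < 2
      have hr1 := recur_aux19 hpos hx0
      have hr2 := recur_aux19 (a := a-1) (by linarith) hx0
      have hE := baseCase_aux19 (a := a-2) (by linarith) (by linarith) hx0
      set F2 := ∫ lam in Set.Ioc (0:ℝ) 1, lam ^ (a-1-1) / (lam + x) with hF2
      set E : ℝ := F2 - (-(π / Real.sin (π * (a-2))) * x ^ (a-2) + 1/(a-2) + x/(1-(a-2)))
        with hEdef
      have hEbd : |E| ≤ (1/(4-a)) * x^2 := by
        rw [show (4:ℝ) - a = 2 - (a-2) by ring]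
        rw [hEdef, hF2, show a - 1 - 1 = a - 2 by ring]
        exact hE
      have hsin : Real.sin (π * (a-2)) = Real.sin (π * a) := by
        rw [show π * (a-2) = π * a - 2*π by ring, Real.sin_sub_two_pi]
      have hxp : x^2 * x ^ (a-2) = x ^ a := by
        have h := Real.rpow_add hx0 2 (a-2)
        rw [show (2:ℝ)+(a-2) = a by ring] at h
        rw [show ((2:ℝ)) = ((2:ℕ):ℝ) by norm_num, Real.rpow_natCast] at h
        exact h.symm
      have key : (∫ lam in Set.Ioc (0:ℝ) 1, lam ^ a / (lam + x)) -
          (-(π / Real.sin (π * a)) * x ^ a + 1 / a + x / (1 - a))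
          = x^2/(a-2) + x^3/(3-a) + x^2 * E := by
        rw [hr1, hr2, hEdef, hsin]
        rw [show (1:ℝ) - a = -(a-1) by ring, div_neg, show (1:ℝ)-(a-2) = 3-a by ring]
        rw [← hxp]
        ring
      rw [key]
      have he1 : |x^2/(a-2)| = (1/(2-a)) * x^2 := by
        rw [show a-2 = -(2-a) by ring, div_neg, abs_neg, abs_of_nonneg (by positivity)]
        ring
      have he2 : |x^3/(3-a)| ≤ (1/(3-a)) * x^2 := by
        rw [abs_of_nonneg (by positivity)]
        rw [div_le_iff₀ h3a]  -- x^3/(3-a) ≤ (1/(3-a))*x^2 ↔ x^3 ≤ (1/(3-a))*x^2*(3-a)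
        have : (1/(3-a)) * x^2 * (3-a) = x^2 := by field_simp
        rw [this]
        nlinarith [sq_nonneg x]
      have he3 : |x^2 * E| ≤ (1/(4-a)) * x^2 := by
        rw [abs_mul, abs_of_nonneg (sq_nonneg x)]
        have h14 : (0:ℝ) ≤ 1/(4-a) := by positivity
        calc x^2 * |E| ≤ x^2 * ((1/(4-a)) * x^2) := by
              apply mul_le_mul_of_nonneg_left hEbd (sq_nonneg x)
          _ = (1/(4-a)) * (x^2 * x^2) := by ring
          _ ≤ (1/(4-a)) * (x^2 * 1) := by
              have hx2 : x^2 ≤ 1 := by nlinarith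
              exact mul_le_mul_of_nonneg_left
                (mul_le_mul_of_nonneg_left hx2 (sq_nonneg x)) h14
          _ = (1/(4-a)) * x^2 := by ring
      calc |x^2/(a-2) + x^3/(3-a) + x^2 * E|
          ≤ |x^2/(a-2)| + |x^3/(3-a)| + |x^2 * E| := by
            exact (abs_add_le _ _).trans (add_le_add_left (abs_add_le _ _) _)
        _ ≤ (1/(2-a)) * x^2 + (1/(3-a)) * x^2 + (1/(4-a)) * x^2 := by
            rw [he1]; exact add_le_add (add_le_add_right he2 _) he3
        _ ≤ (1/(2-a) + 1/(3-a) + 1/(4-a) + 1) * x^2 := by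
            have p2 : (0:ℝ) ≤ x^2 := sq_nonneg x
            have expand : (1/(2-a) + 1/(3-a) + 1/(4-a) + 1) * x^2
                = (1/(2-a))*x^2 + (1/(3-a))*x^2 + (1/(4-a))*x^2 + x^2 := by ring
            linarith
end
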